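/- arXiv:1703.05226 — 4 statements merged into one kernel-verified Lean document; each statement's English description precedes it below -/
import Mathlib

section
/- Let r ≥ 1 and let S be a finite nonempty subset of ℤ^r. Then 0 lies in the interior of the convex hull (taken in ℝ^r) of S if and only if for every nonzero λ ∈ ℤ^r there exists s ∈ S with ⟨λ, s⟩ < 0, where ⟨λ, s⟩ = Σ_j λ_j s_j. -/
open Finset Submodule Module

section HilbertMumford

variable {r : ℕ}

/-- ℚ-linear independent rational coordinate vectors stay ℝ-linear independent. -/
lemma linearIndependent_ratCast {ι κ : Type*} [Fintype ι] {v : ι → κ → ℚ}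
    (hv : LinearIndependent ℚ v) :
    LinearIndependent ℝ (fun i => fun j => ((v i j : ℚ) : ℝ)) := by
  rw [Fintype.linearIndependent_iff] at hv ⊢
  intro c hc
  set W : Submodule ℚ ℝ := Submodule.span ℚ (Set.range c) with hW
  haveI : FiniteDimensional ℚ W := FiniteDimensional.span_of_finite ℚ (Set.finite_range c)
  set m := finrank ℚ W with hm
  set w : Basis (Fin m) ℚ W := Module.finBasis ℚ W with hwdef
  have hmemW : ∀ i, c i ∈ W := fun i => Submodule.subset_span (Set.mem_range_self i)
  set q : ι → Fin m → ℚ := fun i t => w.repr ⟨c i, hmemW i⟩ t with hq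
  have hrepr : ∀ i, c i = ∑ t, q i t • ((w t : ℝ)) := by
    intro i
    have := w.sum_repr ⟨c i, hmemW i⟩
    have := congrArg (Subtype.val) this
    rw [Submodule.coe_sum] at this
    exact this.symm
  have hcj : ∀ j : κ, ∑ i, c i * (v i j : ℝ) = 0 := by
    intro j
    have := congrFun hc j
    simpa using this
  have hw : LinearIndependent ℚ (fun t => (w t : ℝ)) := by
    have := w.linearIndependent
    have h2 := this.map' W.subtype (Submodule.ker_subtype W)
    exact h2
  rw [Fintype.linearIndependent_iff] at hw
  have hqzero : ∀ t (i : ι), q i t = 0 := by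
    have hkey : ∀ j : κ, ∀ t, (∑ i, q i t * v i j) = 0 := by
      intro j
      apply hw
      have : ∑ t, (∑ i, q i t * v i j) • ((w t : ℝ)) = 0 := by
        calc ∑ t, (∑ i, q i t * v i j) • ((w t : ℝ))
            = ∑ t, ∑ i, (q i t * v i j) • ((w t : ℝ)) := by
              refine Finset.sum_congr rfl fun t _ => ?_
              rw [Finset.sum_smul]
          _ = ∑ i, ∑ t, (q i t * v i j) • ((w t : ℝ)) := Finset.sum_comm
          _ = ∑ i, (v i j : ℝ) * (∑ t, q i t • ((w t : ℝ))) := by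
              refine Finset.sum_congr rfl fun i _ => ?_
              rw [Finset.mul_sum]
              refine Finset.sum_congr rfl fun t _ => ?_
              simp only [mul_smul, Rat.smul_def]
              push_cast
              ring
          _ = ∑ i, (v i j : ℝ) * c i := by
              congr 1; funext i; rw [← hrepr i]
          _ = ∑ i, c i * (v i j : ℝ) := by congr 1; funext i; ring
          _ = 0 := hcj j
      exact this
    intro t i
    have h2 : ∀ j, (∑ i, q i t • v i) j = 0 := by
      intro j
      simpa [Finset.sum_apply, smul_eq_mul] using hkey j t
    exact hv (fun i => q i t) (funext h2) i
  intro i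
  rw [hrepr i]
  simp [hqzero _ i]

/-- pairing with a fixed integer vector, over ℚ -/
def pairQ (T : Finset (Fin r → ℤ)) : (Fin r → ℚ) →ₗ[ℚ] ({ s // s ∈ T } → ℚ) where
  toFun y := fun s => ∑ j, (s.1 j : ℚ) * y j
  map_add' u v := by
    funext s; simp [mul_add, Finset.sum_add_distrib]
  map_smul' c v := by
    funext s; simp [Finset.mul_sum, smul_eq_mul, mul_left_comm]

def pairR (T : Finset (Fin r → ℤ)) : (Fin r → ℝ) →ₗ[ℝ] ({ s // s ∈ T } → ℝ) where
  toFun y := fun s => ∑ j, (s.1 j : ℝ) * y j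
  map_add' u v := by
    funext s; simp [mul_add, Finset.sum_add_distrib]
  map_smul' c v := by
    funext s; simp [Finset.mul_sum, smul_eq_mul, mul_left_comm]

lemma pair_cast_comm (T : Finset (Fin r → ℤ)) (y : Fin r → ℚ) (s : { s // s ∈ T }) :
    pairR T (fun j => ((y j : ℚ) : ℝ)) s = ((pairQ T y s : ℚ) : ℝ) := by
  simp only [pairR, pairQ, LinearMap.coe_mk, AddHom.coe_mk]
  push_cast
  rfl

lemma dense_rat_ker (T : Finset (Fin r → ℤ)) (x : Fin r → ℝ)
    (hx : ∀ s ∈ T, ∑ j, (s j : ℝ) * x j = 0) {ε : ℝ} (hε : 0 < ε) :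
    ∃ q : Fin r → ℚ, (∀ s ∈ T, ∑ j, (s j : ℚ) * q j = 0) ∧ ∀ j, |(q j : ℝ) - x j| < ε := by
  classical
  set Lq := pairQ T with hLq
  set Lr := pairR T with hLr
  set k := finrank ℚ (LinearMap.ker Lq) with hk
  set b : Basis (Fin k) ℚ (LinearMap.ker Lq) := Module.finBasis ℚ _ with hb
  set u : Fin k → (Fin r → ℝ) := fun i => fun j => (((b i : Fin r → ℚ) j : ℚ) : ℝ) with hu
  -- b i as elements of ℚ^r are ℚ-independent
  have hbind : LinearIndependent ℚ (fun i => ((b i : Fin r → ℚ))) := by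
    have := b.linearIndependent.map' (LinearMap.ker Lq).subtype (Submodule.ker_subtype _)
    exact this
  have huind : LinearIndependent ℝ u := linearIndependent_ratCast hbind
  have humem : ∀ i, u i ∈ LinearMap.ker Lr := by
    intro i
    have h0 : pairQ T ((b i : Fin r → ℚ)) = 0 := (b i).2
    rw [LinearMap.mem_ker]
    funext s
    have h1 : pairQ T ((b i : Fin r → ℚ)) s = 0 := by rw [h0]; rfl
    have h2 := pair_cast_comm T ((b i : Fin r → ℚ)) s
    show pairR T (u i) s = 0
    rw [show u i = (fun j => (((b i : Fin r → ℚ) j : ℚ) : ℝ)) from rfl, h2, h1]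
    norm_num
  have hspanle : Submodule.span ℝ (Set.range u) ≤ LinearMap.ker Lr := by
    rw [Submodule.span_le]
    rintro _ ⟨i, rfl⟩
    exact humem i
  -- rank comparison
  have hrank : finrank ℚ (LinearMap.range Lq) ≤ finrank ℝ (LinearMap.range Lr) := by
    set ρ := finrank ℚ (LinearMap.range Lq) with hρ
    set cB : Basis (Fin ρ) ℚ (LinearMap.range Lq) := Module.finBasis ℚ _ with hcB
    have hpre : ∀ i, ∃ y : Fin r → ℚ, Lq y = (cB i : { s // s ∈ T } → ℚ) := by
      intro i; exact (cB i).2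
    choose y hy using hpre
    have hcind : LinearIndependent ℚ (fun i => ((cB i : { s // s ∈ T } → ℚ))) := by
      have := cB.linearIndependent.map' (LinearMap.range Lq).subtype (Submodule.ker_subtype _)
      exact this
    set w : Fin ρ → ({ s // s ∈ T } → ℝ) := fun i => fun s => (((cB i : { s // s ∈ T } → ℚ) s : ℚ) : ℝ) with hw
    have hwind : LinearIndependent ℝ w := linearIndependent_ratCast hcind
    have hwmem : ∀ i, w i ∈ LinearMap.range Lr := by
      intro i
      refine ⟨fun j => ((y i j : ℚ) : ℝ), ?_⟩
      funext s
      rw [pair_cast_comm T (y i), hy i]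
    have hle : Submodule.span ℝ (Set.range w) ≤ LinearMap.range Lr := by
      rw [Submodule.span_le]; rintro _ ⟨i, rfl⟩; exact hwmem i
    have h1 : finrank ℝ (Submodule.span ℝ (Set.range w)) = ρ := by
      rw [finrank_span_eq_card hwind, Fintype.card_fin]
    calc ρ = finrank ℝ (Submodule.span ℝ (Set.range w)) := h1.symm
      _ ≤ finrank ℝ (LinearMap.range Lr) := Submodule.finrank_mono hle
  -- rank-nullity
  have hrnq : finrank ℚ (LinearMap.range Lq) + finrank ℚ (LinearMap.ker Lq) = r := by
    rw [LinearMap.finrank_range_add_finrank_ker]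
    simp [Module.finrank_pi]
  have hrnr : finrank ℝ (LinearMap.range Lr) + finrank ℝ (LinearMap.ker Lr) = r := by
    rw [LinearMap.finrank_range_add_finrank_ker]
    simp [Module.finrank_pi]
  have hkerle : finrank ℝ (LinearMap.ker Lr) ≤ k := by omega
  have hspan_eq : Submodule.span ℝ (Set.range u) = LinearMap.ker Lr := by
    apply Submodule.eq_of_le_of_finrank_le hspanle
    rw [finrank_span_eq_card huind, Fintype.card_fin]
    exact hkerle
  -- x lies in the span
  have hxker : x ∈ LinearMap.ker Lr := by
    rw [LinearMap.mem_ker]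
    funext s
    exact hx s.1 s.2
  rw [← hspan_eq, mem_span_range_iff_exists_fun] at hxker
  obtain ⟨c, hc⟩ := hxker
  -- rational approximation of coefficients
  set D : ℝ := 1 + ∑ i, ‖u i‖ with hD
  have hDpos : 0 < D := by
    have : (0:ℝ) ≤ ∑ i, ‖u i‖ := Finset.sum_nonneg fun i _ => norm_nonneg _
    linarith
  have hδ : 0 < ε / D := div_pos hε hDpos
  have hdex : ∀ i : Fin k, ∃ d : ℚ, |c i - d| < ε / D := fun i => exists_rat_near (c i) hδ
  choose d hd using hdex
  refine ⟨fun j => ∑ i, d i * (b i : Fin r → ℚ) j, ?_, ?_⟩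
  · -- in the kernel
    intro s hs
    have hmem : (fun j => ∑ i, d i * (b i : Fin r → ℚ) j) ∈ LinearMap.ker Lq := by
      have : (fun j => ∑ i, d i * (b i : Fin r → ℚ) j) = ∑ i, d i • ((b i : Fin r → ℚ)) := by
        funext j; simp [Finset.sum_apply, smul_eq_mul]
      rw [this]
      exact Submodule.sum_mem _ fun i _ =>
        Submodule.smul_mem _ _ ((b i).2)
    rw [LinearMap.mem_ker] at hmem
    have h3 := congrFun hmem ⟨s, hs⟩
    simpa [hLq, pairQ] using h3
  · -- close to x
    intro j
    have hxj : x j = ∑ i, c i * u i j := by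
      rw [← hc]; simp [Finset.sum_apply, smul_eq_mul]
    have hqj : ((∑ i, d i * (b i : Fin r → ℚ) j : ℚ) : ℝ) = ∑ i, (d i : ℝ) * u i j := by
      push_cast
      rfl
    rw [hqj, hxj, ← Finset.sum_sub_distrib]
    have hbound : ∀ i ∈ Finset.univ (α := Fin k),
        |(d i : ℝ) * u i j - c i * u i j| ≤ (ε / D) * ‖u i‖ := by
      intro i _
      rw [← sub_mul, abs_mul]
      have h1 : |(d i : ℝ) - c i| ≤ ε / D := by
        rw [abs_sub_comm]; exact (hd i).le
      have h2 : |u i j| ≤ ‖u i‖ := by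
        simpa using norm_le_pi_norm (u i) j
      exact mul_le_mul h1 h2 (abs_nonneg _) hδ.le
    calc |∑ i, ((d i : ℝ) * u i j - c i * u i j)|
        ≤ ∑ i, |(d i : ℝ) * u i j - c i * u i j| := Finset.abs_sum_le_sum_abs _ _
      _ ≤ ∑ i, (ε / D) * ‖u i‖ := Finset.sum_le_sum hbound
      _ = (ε / D) * ∑ i, ‖u i‖ := by rw [Finset.mul_sum]
      _ < (ε / D) * D := by
          apply mul_lt_mul_of_pos_left _ hδ
          rw [hD]; linarith
      _ = ε := by field_simp

lemma lin_apply_eq_sum (f : (Fin r → ℝ) →ₗ[ℝ] ℝ) (y : Fin r → ℝ) :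
    f y = ∑ j, y j * f (fun t => if j = t then 1 else 0) := by
  conv_lhs => rw [pi_eq_sum_univ y]
  rw [map_sum]
  refine Finset.sum_congr rfl fun j _ => ?_
  rw [map_smul, smul_eq_mul]

lemma int_vector_from_real (S : Finset (Fin r → ℤ)) (lam : Fin r → ℝ) (hlam : lam ≠ 0)
    (hpos : ∀ s ∈ S, 0 ≤ ∑ j, (s j : ℝ) * lam j) :
    ∃ l : Fin r → ℤ, l ≠ 0 ∧ ∀ s ∈ S, 0 ≤ ∑ j, l j * s j := by
  classical
  obtain ⟨j0, hj0⟩ := Function.ne_iff.mp hlam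
  rw [Pi.zero_apply] at hj0
  set T : Finset (Fin r → ℤ) := S.filter (fun s => ∑ j, (s j : ℝ) * lam j = 0) with hT
  have hxT : ∀ s ∈ T, ∑ j, (s j : ℝ) * lam j = 0 := fun s hs => (Finset.mem_filter.mp hs).2
  have hstrict : ∀ s ∈ S, s ∉ T → 0 < ∑ j, (s j : ℝ) * lam j := by
    intro s hs hns
    rcases (hpos s hs).lt_or_eq with h | h
    · exact h
    · exact absurd (Finset.mem_filter.mpr ⟨hs, h.symm⟩) hns
  set F : (Fin r → ℤ) → ℝ := fun s => (∑ j, (s j : ℝ) * lam j) / (∑ j, |(s j : ℝ)| + 1) with hF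
  have hden : ∀ s : Fin r → ℤ, 0 < ∑ j, |(s j : ℝ)| + 1 := by
    intro s
    have : (0:ℝ) ≤ ∑ j, |(s j : ℝ)| := Finset.sum_nonneg fun j _ => abs_nonneg _
    linarith
  have hFpos : ∀ s ∈ S \ T, 0 < F s := by
    intro s hs
    rw [Finset.mem_sdiff] at hs
    exact div_pos (hstrict s hs.1 hs.2) (hden s)
  set ε₁ : ℝ := if h : (S \ T).Nonempty then (S \ T).inf' h F else 1 with hε₁
  have hε₁pos : 0 < ε₁ := by
    rw [hε₁]
    split_ifs with h
    · rw [Finset.lt_inf'_iff]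
      exact fun s hs => hFpos s hs
    · norm_num
  have hε₁le : ∀ s ∈ S, s ∉ T → ε₁ ≤ F s := by
    intro s hs hns
    have hmem : s ∈ S \ T := Finset.mem_sdiff.mpr ⟨hs, hns⟩
    rw [hε₁]
    rw [dif_pos ⟨s, hmem⟩]
    exact Finset.inf'_le F hmem
  set ε : ℝ := min ε₁ (|lam j0| / 2) with hε
  have hεpos : 0 < ε := lt_min hε₁pos (by positivity)
  obtain ⟨q, hq0, hqnear⟩ := dense_rat_ker T lam hxT hεpos
  have hqj0 : q j0 ≠ 0 := by
    intro h
    have h1 := hqnear j0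
    rw [h] at h1
    simp only [Rat.cast_zero, zero_sub, abs_neg] at h1
    have h2 : ε ≤ |lam j0| / 2 := min_le_right _ _
    have : |lam j0| < |lam j0| / 2 := lt_of_lt_of_le h1 h2
    have : 0 < |lam j0| := abs_pos.mpr hj0
    linarith
  have hqpos : ∀ s ∈ S, 0 ≤ ∑ j, (s j : ℚ) * q j := by
    intro s hs
    by_cases hsT : s ∈ T
    · rw [hq0 s hsT]
    · have h1 : 0 < ∑ j, (s j : ℝ) * lam j := hstrict s hs hsT
      have key : |∑ j, (s j : ℝ) * ((q j : ℝ) - lam j)| < ∑ j, (s j : ℝ) * lam j := by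
        have hb : ∀ j ∈ Finset.univ (α := Fin r),
            |(s j : ℝ) * ((q j : ℝ) - lam j)| ≤ |(s j : ℝ)| * ε := by
          intro j _
          rw [abs_mul]
          exact mul_le_mul_of_nonneg_left (hqnear j).le (abs_nonneg _)
        calc |∑ j, (s j : ℝ) * ((q j : ℝ) - lam j)|
            ≤ ∑ j, |(s j : ℝ) * ((q j : ℝ) - lam j)| := Finset.abs_sum_le_sum_abs _ _
          _ ≤ ∑ j, |(s j : ℝ)| * ε := Finset.sum_le_sum hb
          _ = (∑ j, |(s j : ℝ)|) * ε := by rw [Finset.sum_mul]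
          _ ≤ (∑ j, |(s j : ℝ)|) * F s := by
              apply mul_le_mul_of_nonneg_left _ (Finset.sum_nonneg fun j _ => abs_nonneg _)
              exact le_trans (min_le_left _ _) (hε₁le s hs hsT)
          _ < (∑ j, |(s j : ℝ)| + 1) * F s := by
              apply mul_lt_mul_of_pos_right _ (hFpos s (Finset.mem_sdiff.mpr ⟨hs, hsT⟩))
              linarith
          _ = ∑ j, (s j : ℝ) * lam j := by
              rw [hF]
              field_simp
      have hreal : 0 < ∑ j, (s j : ℝ) * (q j : ℝ) := by
        have hsplit : ∑ j, (s j : ℝ) * (q j : ℝ)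
            = (∑ j, (s j : ℝ) * lam j) + ∑ j, (s j : ℝ) * ((q j : ℝ) - lam j) := by
          rw [← Finset.sum_add_distrib]
          refine Finset.sum_congr rfl fun j _ => by ring
        rw [hsplit]
        have := neg_abs_le (∑ j, (s j : ℝ) * ((q j : ℝ) - lam j))
        linarith
      have hcast : ((∑ j, (s j : ℚ) * q j : ℚ) : ℝ) = ∑ j, (s j : ℝ) * (q j : ℝ) := by
        push_cast
        rfl
      have : (0:ℝ) ≤ ((∑ j, (s j : ℚ) * q j : ℚ) : ℝ) := by rw [hcast]; exact hreal.le
      exact_mod_cast this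
  -- clear denominators
  set N : ℕ := ∏ j, (q j).den with hN
  have hNpos : 0 < N := Finset.prod_pos fun j _ => (q j).pos
  set l : Fin r → ℤ := fun j => (q j).num * ((N / (q j).den : ℕ) : ℤ) with hl
  have hcastl : ∀ j, (l j : ℚ) = (N : ℚ) * q j := by
    intro j
    have hdvd : (q j).den ∣ N := Finset.dvd_prod_of_mem _ (Finset.mem_univ j)
    have h1 : ((N / (q j).den : ℕ) : ℚ) * ((q j).den : ℚ) = (N : ℚ) := by
      rw [← Nat.cast_mul, Nat.div_mul_cancel hdvd]
    have hden0 : ((q j).den : ℚ) ≠ 0 := by exact_mod_cast (q j).pos.ne'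
    have h2 := Rat.num_div_den (q j)
    rw [div_eq_iff hden0] at h2
    calc (l j : ℚ) = ((q j).num : ℚ) * (((N / (q j).den : ℕ) : ℤ) : ℚ) := by
          rw [hl]; rw [Int.cast_mul]
      _ = (q j * ((q j).den : ℚ)) * ((N / (q j).den : ℕ) : ℚ) := by
          rw [Int.cast_natCast, h2]
      _ = q j * (((N / (q j).den : ℕ) : ℚ) * ((q j).den : ℚ)) := by ring
      _ = q j * (N : ℚ) := by rw [h1]
      _ = (N : ℚ) * q j := by ring
  refine ⟨l, ?_, ?_⟩
  · intro h
    have := congrFun h j0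
    rw [Pi.zero_apply] at this
    have h2 : (l j0 : ℚ) = 0 := by exact_mod_cast this
    rw [hcastl j0] at h2
    rcases mul_eq_zero.mp h2 with h3 | h3
    · exact absurd h3 (by exact_mod_cast hNpos.ne')
    · exact hqj0 h3
  · intro s hs
    have h1 : (0:ℚ) ≤ (N : ℚ) * ∑ j, (s j : ℚ) * q j :=
      mul_nonneg (by positivity) (hqpos s hs)
    have h2 : ((∑ j, l j * s j : ℤ) : ℚ) = (N : ℚ) * ∑ j, (s j : ℚ) * q j := by
      push_cast
      rw [Finset.mul_sum]
      refine Finset.sum_congr rfl fun j _ => ?_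
      rw [hcastl j]
      push_cast
      ring
    have : (0:ℚ) ≤ ((∑ j, l j * s j : ℤ) : ℚ) := by rw [h2]; exact h1
    exact_mod_cast this

lemma real_sep (S : Finset (Fin r → ℤ)) (hS : S.Nonempty)
    (hni : (0 : Fin r → ℝ) ∉
      interior (convexHull ℝ ((fun s : Fin r → ℤ => fun j => (s j : ℝ)) '' (S : Set (Fin r → ℤ))))) :
    ∃ lam : Fin r → ℝ, lam ≠ 0 ∧ ∀ s ∈ S, 0 ≤ ∑ j, (s j : ℝ) * lam j := by
  classical
  set A : Set (Fin r → ℝ) := (fun s : Fin r → ℤ => fun j => (s j : ℝ)) '' (S : Set (Fin r → ℤ))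
    with hA
  set K := convexHull ℝ A with hK
  have hKconv : Convex ℝ K := convex_convexHull _ _
  obtain ⟨s₀, hs₀⟩ := hS
  have hmemK : ∀ s ∈ S, (fun j => ((s j : ℤ) : ℝ)) ∈ K := by
    intro s hs
    exact subset_convexHull _ _ ⟨s, hs, rfl⟩
  have hKne : K.Nonempty := ⟨_, hmemK s₀ hs₀⟩
  by_cases hint : (interior K).Nonempty
  · -- interior nonempty: separate 0 from the open interior
    obtain ⟨f, hf⟩ := geometric_hahn_banach_open_point hKconv.interior isOpen_interior hni
    have hf0 : f (0 : Fin r → ℝ) = 0 := map_zero f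
    rw [hf0] at hf
    obtain ⟨a0, ha0⟩ := hint
    have hfa0 : f a0 < 0 := hf a0 ha0
    have hfneg : ∀ y ∈ K, f y ≤ 0 := by
      intro y hy
      by_contra hgt
      push_neg at hgt
      set t : ℝ := min 1 (f y / (2 * (f y - f a0))) with ht
      have hfy : 0 < f y := hgt
      have hdiff : 0 < f y - f a0 := by linarith
      have htpos : 0 < t := lt_min one_pos (by positivity)
      have htle : t ≤ f y / (2 * (f y - f a0)) := min_le_right _ _
      have hmem : y + t • (a0 - y) ∈ interior K :=
        hKconv.add_smul_sub_mem_interior hy ha0 ⟨htpos, min_le_left _ _⟩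
      have hval : f (y + t • (a0 - y)) = f y + t * (f a0 - f y) := by
        rw [map_add, map_smul, map_sub, smul_eq_mul]
      have hneg := hf _ hmem
      rw [hval] at hneg
      have h2 : t * (f y - f a0) ≤ f y / 2 := by
        have := mul_le_mul_of_nonneg_right htle hdiff.le
        calc t * (f y - f a0) ≤ (f y / (2 * (f y - f a0))) * (f y - f a0) := this
          _ = f y / 2 := by field_simp
      nlinarith
    have hsum : ∀ y : Fin r → ℝ, f y = ∑ j, y j * f (fun t => if j = t then 1 else 0) := by
      intro y
      have := lin_apply_eq_sum (f : (Fin r → ℝ) →ₗ[ℝ] ℝ) y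
      simpa using this
    refine ⟨fun j => -(f (fun t => if j = t then 1 else 0)), ?_, ?_⟩
    · intro h
      have hz : ∀ j, f (fun t => if j = t then (1:ℝ) else 0) = 0 := by
        intro j
        have := congrFun h j
        rw [Pi.zero_apply, neg_eq_zero] at this
        exact this
      have : f a0 = 0 := by
        rw [hsum a0, Finset.sum_eq_zero fun j _ => by rw [hz j, mul_zero]]
      linarith
    · intro s hs
      have h1 : f (fun j => ((s j : ℤ) : ℝ)) ≤ 0 := hfneg _ (hmemK s hs)
      rw [hsum] at h1
      have h3 : ∑ j, (s j : ℝ) * -(f (fun t => if j = t then 1 else 0))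
          = -(∑ j, (s j : ℝ) * f (fun t => if j = t then 1 else 0)) := by
        simp [mul_neg]
      simp only []
      rw [h3]
      linarith
  · -- interior empty: K lies in a proper affine subspace
    have haff : affineSpan ℝ K ≠ ⊤ := by
      intro h
      exact hint (hKconv.interior_nonempty_iff_affineSpan_eq_top.mpr h)
    have haK : (fun j => ((s₀ j : ℤ) : ℝ)) ∈ affineSpan ℝ K := subset_affineSpan ℝ K (hmemK s₀ hs₀)
    set V := (affineSpan ℝ K).direction with hV
    have hVne : V ≠ ⊤ := by
      intro h
      exact haff ((AffineSubspace.direction_eq_top_iff_of_nonempty ⟨_, haK⟩).mp h)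
    obtain ⟨f, hfne, hfmap⟩ :=
      Submodule.exists_dual_map_eq_bot_of_lt_top (p := V) (lt_top_iff_ne_top.mpr hVne)
        inferInstance
    have hfV : ∀ v ∈ V, f v = 0 := by
      intro v hv
      have : f v ∈ V.map f := ⟨v, hv, rfl⟩
      rw [hfmap] at this
      simpa using this
    set a : Fin r → ℝ := fun j => ((s₀ j : ℤ) : ℝ) with ha
    have hconst : ∀ y ∈ K, f y = f a := by
      intro y hy
      have hdir : y - a ∈ V := by
        have := AffineSubspace.vsub_mem_direction (subset_affineSpan ℝ K hy) haK
        simpa [vsub_eq_sub] using this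
      have h0 := hfV _ hdir
      rw [map_sub] at h0
      linarith
    have key : ∀ g : (Fin r → ℝ) →ₗ[ℝ] ℝ, g ≠ 0 → (∀ y ∈ K, 0 ≤ g y) →
        ∃ lam : Fin r → ℝ, lam ≠ 0 ∧ ∀ s ∈ S, 0 ≤ ∑ j, (s j : ℝ) * lam j := by
      intro g hgne hgpos
      refine ⟨fun j => g (fun t => if j = t then 1 else 0), ?_, ?_⟩
      · intro h
        apply hgne
        apply LinearMap.ext
        intro y
        rw [lin_apply_eq_sum g y]
        simp only [LinearMap.zero_apply]
        have : ∀ j, g (fun t => if j = t then (1:ℝ) else 0) = 0 := fun j => congrFun h j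
        rw [Finset.sum_eq_zero fun j _ => by rw [this j, mul_zero]]
      · intro s hs
        have := hgpos _ (hmemK s hs)
        rw [lin_apply_eq_sum g] at this
        exact this
    rcases le_or_gt 0 (f a) with hfa | hfa
    · refine key f hfne ?_
      intro y hy
      rw [hconst y hy]
      exact hfa
    · refine key (-f) (by simpa using neg_ne_zero.mpr hfne) ?_
      intro y hy
      have := hconst y hy
      simp only [LinearMap.neg_apply]
      linarith

end HilbertMumford

/-- Hilbert–Mumford criterion for stability tested against integral one-parameter
subgroups: for a finite nonempty `S ⊆ ℤ^r`, `0` lies in the interior of the real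
convex hull of `S` iff every nonzero integral `λ` pairs strictly negatively with
some element of `S`. -/
theorem stmt3 (r : ℕ) (hr : 1 ≤ r) (S : Finset (Fin r → ℤ)) (hS : S.Nonempty) :
    (0 : Fin r → ℝ) ∈
        interior (convexHull ℝ ((fun s : Fin r → ℤ => fun j => (s j : ℝ)) '' (S : Set (Fin r → ℤ)))) ↔
      ∀ l : Fin r → ℤ, l ≠ 0 → ∃ s ∈ S, ∑ j, l j * s j < 0 := by
  constructor
  · intro h0 l hl
    by_contra hno
    push_neg at hno
    -- all pairings nonnegative
    have hpos : ∀ s ∈ S, (0:ℤ) ≤ ∑ j, l j * s j := fun s hs => hno s hs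
    set g : (Fin r → ℝ) → ℝ := fun y => ∑ j, (l j : ℝ) * y j with hg
    have hglin : IsLinearMap ℝ g := by
      constructor
      · intro u v
        rw [hg]
        simp only [Pi.add_apply, mul_add]
        rw [Finset.sum_add_distrib]
      · intro c u
        rw [hg]
        simp only [Pi.smul_apply, smul_eq_mul]
        rw [Finset.mul_sum]
        refine Finset.sum_congr rfl fun j _ => by ring
    have hHconv : Convex ℝ {y : Fin r → ℝ | 0 ≤ g y} := convex_halfSpace_ge hglin 0
    have himg : (fun s : Fin r → ℤ => fun j => (s j : ℝ)) '' (S : Set (Fin r → ℤ))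
        ⊆ {y : Fin r → ℝ | 0 ≤ g y} := by
      rintro _ ⟨s, hs, rfl⟩
      have := hpos s hs
      have hcast : ((∑ j, l j * s j : ℤ) : ℝ) = g (fun j => (s j : ℝ)) := by
        rw [hg]; push_cast; rfl
      simp only [Set.mem_setOf_eq]
      rw [← hcast]
      exact_mod_cast this
    have hKsub := convexHull_min himg hHconv
    rw [mem_interior_iff_mem_nhds, Metric.mem_nhds_iff] at h0
    obtain ⟨δ, hδ, hball⟩ := h0
    set lR : Fin r → ℝ := fun j => (l j : ℝ) with hlR
    have hlRne : lR ≠ 0 := by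
      intro h
      apply hl
      funext j
      have := congrFun h j
      rw [hlR] at this
      simp only [Pi.zero_apply] at this ⊢
      exact_mod_cast this
    set c : ℝ := -(δ/2) / (‖lR‖ + 1) with hc
    have hnormpos : (0:ℝ) < ‖lR‖ + 1 := by positivity
    have hcneg : c < 0 := by
      rw [hc]
      apply div_neg_of_neg_of_pos _ hnormpos
      linarith
    have hymem : c • lR ∈ Metric.ball (0 : Fin r → ℝ) δ := by
      rw [mem_ball_zero_iff, norm_smul]
      have h1 : ‖c‖ = (δ/2) / (‖lR‖ + 1) := by
        rw [hc, norm_div, Real.norm_eq_abs, Real.norm_eq_abs, abs_neg,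
          abs_of_pos (by linarith : (0:ℝ) < δ/2), abs_of_pos hnormpos]
      rw [h1]
      calc (δ/2) / (‖lR‖ + 1) * ‖lR‖ ≤ (δ/2) * 1 := by
            rw [div_mul_eq_mul_div, mul_comm, mul_one]
            rw [div_le_iff₀ hnormpos]
            have : (0:ℝ) ≤ ‖lR‖ := norm_nonneg _
            nlinarith
        _ < δ := by linarith
    have hz := hKsub (hball hymem)
    simp only [Set.mem_setOf_eq] at hz
    have hgval : g (c • lR) = c * ∑ j, (l j : ℝ)^2 := by
      rw [hg]
      simp only [Pi.smul_apply, smul_eq_mul]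
      rw [Finset.mul_sum]
      refine Finset.sum_congr rfl fun j _ => ?_
      rw [hlR]
      ring
    rw [hgval] at hz
    have hsumpos : 0 < ∑ j, (l j : ℝ)^2 := by
      obtain ⟨j0, hj0⟩ := Function.ne_iff.mp hl
      rw [Pi.zero_apply] at hj0
      refine Finset.sum_pos' (fun j _ => sq_nonneg _) ⟨j0, Finset.mem_univ j0, ?_⟩
      have : ((l j0 : ℝ)) ≠ 0 := by exact_mod_cast hj0
      positivity
    nlinarith
  · intro h
    by_contra hni
    obtain ⟨lam, hlam, hpos⟩ := real_sep S hS hni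
    obtain ⟨l, hlne, hlpos⟩ := int_vector_from_real S lam hlam hpos
    obtain ⟨s, hs, hneg⟩ := h l hlne
    exact absurd (hlpos s hs) (not_le.mpr hneg)
end

section
/- Let k be an infinite field, let n, r ≥ 1, and let α_0, …, α_{n−1} ∈ ℤ^r. Let the torus T = (kˣ)^r act on k[x_0, …, x_{n−1}] by k-algebra automorphisms with t · x_i = (∏_{j=1}^r t_j^{α_i(j)}) x_i. Let x = (x_0, …, x_{n−1}) ∈ k^n be a nonzero point. Then there exists a T-invariant homogeneous polynomial f of degree ≥ 1 with f(x) ≠ 0 if and only if 0 lies in the convex hull in ℝ^r of the finite set {α_i : x_i ≠ 0}. -/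
open Matrix MvPolynomial


lemma unitsZpow_eq_zero {k : Type*} [Field k] [Infinite k] {c : ℤ}
    (h : ∀ u : kˣ, u ^ c = 1) : c = 0 := by
  by_contra hc
  have hnn : 0 < c.natAbs := Int.natAbs_pos.mpr hc
  have hroots : Set.Finite {a : k | (Polynomial.X ^ c.natAbs - 1 : Polynomial k).IsRoot a} := by
    apply Polynomial.finite_setOf_isRoot
    intro h0
    have h1 := congrArg (Polynomial.coeff · c.natAbs) h0
    simp only [Polynomial.coeff_sub, Polynomial.coeff_X_pow, if_pos rfl, Polynomial.coeff_zero,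
      Polynomial.coeff_one, (Nat.pos_iff_ne_zero.mp hnn)] at h1
    simp at h1
  have hsub : {a : k | a ≠ 0} ⊆ {a : k | (Polynomial.X ^ c.natAbs - 1 : Polynomial k).IsRoot a} := by
    intro a ha
    have hu := h (Units.mk0 a ha)
    have h2 : (Units.mk0 a ha) ^ (c.natAbs : ℤ) = 1 := by
      rcases Int.natAbs_eq c with he | he
      · rw [← he, hu]
      · rw [← neg_neg (c.natAbs : ℤ), ← he, _root_.zpow_neg, hu, inv_one]
    rw [zpow_natCast] at h2
    have hk : a ^ c.natAbs = 1 := by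
      have := congrArg (Units.val) h2
      simpa using this
    simp [Polynomial.IsRoot, hk]
  have hfin : Set.Finite {a : k | a ≠ 0} := hroots.subset hsub
  have hinf : Set.Infinite {a : k | a ≠ 0} := by
    have := (Set.finite_singleton (0 : k)).infinite_compl
    have he : ({0}ᶜ : Set k) = {a : k | a ≠ 0} := by ext a; simp
    rwa [he] at this
  exact hinf hfin


lemma coeff_aeval_smulX {k : Type*} [CommRing k] {n : ℕ} (c : Fin n → k)
    (f : MvPolynomial (Fin n) k) (m : Fin n →₀ ℕ) :
    (MvPolynomial.aeval (fun i => c i • (MvPolynomial.X i : MvPolynomial (Fin n) k)) f).coeff m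
      = (∏ i, c i ^ m i) * f.coeff m := by
  induction f using MvPolynomial.induction_on' with
  | monomial m' a =>
    rw [aeval_monomial]
    have h1 : (m'.prod fun i e => (c i • (X i : MvPolynomial (Fin n) k)) ^ e)
        = C (∏ i, c i ^ m' i) * (m'.prod fun i e => (X i : MvPolynomial (Fin n) k) ^ e) := by
      have : ∀ i e, (c i • (X i : MvPolynomial (Fin n) k)) ^ e
          = C (c i ^ e) * (X i : MvPolynomial (Fin n) k) ^ e := by
        intro i e
        rw [smul_eq_C_mul, mul_pow, map_pow]
      simp_rw [this]
      rw [Finsupp.prod_mul, ← Finsupp.prod_pow m' c, Finsupp.prod, ← map_prod C (fun a => c a ^ m' a) m'.support]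
      rfl
    rw [h1, ← mul_assoc, mul_comm ((algebraMap k (MvPolynomial (Fin n) k)) a) (C (∏ i, c i ^ m' i)), mul_assoc, MvPolynomial.algebraMap_eq, ← MvPolynomial.monomial_eq]
    rw [coeff_C_mul, coeff_monomial]
    rcases eq_or_ne m' m with rfl | hne
    · simp
    · simp [hne]
  | add p q hp hq =>
    rw [map_add, MvPolynomial.coeff_add, MvPolynomial.coeff_add, hp, hq, mul_add]
lemma prod_zpow_eq_zpow_sum {G : Type*} [CommGroup G] {ι : Type*} (s : Finset ι)
    (e : ι → ℤ) (a : G) : ∏ i ∈ s, a ^ e i = a ^ (∑ i ∈ s, e i) := by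
  classical
  induction s using Finset.induction_on with
  | empty => simp
  | insert i s hx ih => rw [Finset.prod_insert hx, Finset.sum_insert hx, _root_.zpow_add, ih]

lemma weight_zero_of_invariant {k : Type*} [Field k] [Infinite k] {n r : ℕ}
    (α : Fin n → Fin r → ℤ) (f : MvPolynomial (Fin n) k)
    (hinv : ∀ t : Fin r → kˣ,
      MvPolynomial.aeval
        (fun i => (((∏ j, t j ^ α i j : kˣ) : k)) • MvPolynomial.X i) f = f)
    {m : Fin n →₀ ℕ} (hm : f.coeff m ≠ 0) (j0 : Fin r) :
    ∑ i, (m i : ℤ) * α i j0 = 0 := by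
  have key : ∀ u : kˣ, u ^ (∑ i, (m i : ℤ) * α i j0) = 1 := by
    intro u
    set t : Fin r → kˣ := fun j => if j = j0 then u else 1 with ht
    have h1 := congrArg (MvPolynomial.coeff m) (hinv t)
    rw [coeff_aeval_smulX] at h1
    have h2 : (∏ i, (((∏ j, t j ^ α i j : kˣ) : k)) ^ m i) = 1 :=
      mul_right_cancel₀ hm (by rw [h1, one_mul])
    have h3 : (∏ i, (∏ j, t j ^ α i j) ^ m i : kˣ) = 1 := by
      apply Units.ext
      push_cast [Units.val_zpow_eq_zpow_val] at h2 ⊢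
      exact h2
    have h4 : ∀ i : Fin n, (∏ j, t j ^ α i j) = u ^ α i j0 := by
      intro i
      rw [Finset.prod_eq_single j0 (fun b _ hb => by simp [ht, hb]) (by simp)]
      simp [ht]
    calc u ^ (∑ i, (m i : ℤ) * α i j0)
        = ∏ i, u ^ ((m i : ℤ) * α i j0) := (prod_zpow_eq_zpow_sum _ _ _).symm
      _ = ∏ i, (∏ j, t j ^ α i j) ^ m i := by
          refine Finset.prod_congr rfl fun i _ => ?_
          rw [h4 i, ← zpow_natCast (u ^ α i j0) (m i), ← _root_.zpow_mul, mul_comm]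
      _ = 1 := h3
  exact unitsZpow_eq_zero key


/-- From `0` in the real convex hull of integer weight vectors supported on `P`,
extract natural-number weights. -/
lemma mulVec_cast {m' n' : Type*} [Fintype n'] (A : Matrix m' n' ℚ) (v : n' → ℚ) :
    (A.map (Rat.cast : ℚ → ℝ)) *ᵥ (fun i => ((v i : ℚ) : ℝ)) = fun i => (((A *ᵥ v) i : ℚ) : ℝ) := by
  funext i
  exact (RingHom.map_mulVec (Rat.castHom ℝ) A v i).symm

lemma exists_nat_weights {n r : ℕ} (α : Fin n → Fin r → ℤ) (P : Set (Fin n))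
    (h : (0 : Fin r → ℝ) ∈
      convexHull ℝ ((fun s : Fin r → ℤ => fun j => (s j : ℝ)) '' (α '' P))) :
    ∃ m : Fin n → ℕ, (∀ i, m i ≠ 0 → i ∈ P) ∧ 0 < ∑ i, m i ∧
      ∀ j, ∑ i, (m i : ℤ) * α i j = 0 := by
  classical
  obtain ⟨ι, hfin, z, w, hzs, hai, hw0, hw1, hwz⟩ := eq_pos_convex_span_of_mem_convexHull h
  -- pick preimages
  have hz' : ∀ i : ι, ∃ i' : Fin n, i' ∈ P ∧ (fun j => ((α i' j : ℤ) : ℝ)) = z i := by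
    intro i
    obtain ⟨s, ⟨i', hi', rfl⟩, hs⟩ := hzs ⟨i, rfl⟩
    exact ⟨i', hi', hs⟩
  choose pick hpickP hpickz using hz'
  have hzij : ∀ (i : ι) (j : Fin r), z i j = ((α (pick i) j : ℤ) : ℝ) := by
    intro i j; rw [← hpickz i]
  -- matrices
  set Mq : Matrix (Fin (r + 1)) ι ℚ :=
    fun j i => Fin.cases 1 (fun j' => ((α (pick i) j' : ℤ) : ℚ)) j with hMq
  set N : Matrix (Fin (r + 1)) ι ℝ := Mq.map (Rat.cast) with hN
  have hNval : ∀ i, N 0 i = 1 := fun i => by rw [hN, Matrix.map_apply, hMq]; simp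
  have hNval' : ∀ (j : Fin r) i, N j.succ i = ((α (pick i) j : ℤ) : ℝ) := fun j i => by
    rw [hN, Matrix.map_apply, hMq]; simp
  -- N *ᵥ w = b
  set b : Fin (r + 1) → ℚ := fun j => if j = 0 then 1 else 0 with hb
  have hNw : N *ᵥ w = fun j => ((b j : ℚ) : ℝ) := by
    funext j
    refine Fin.cases ?_ (fun j' => ?_) j
    · simpa [Matrix.mulVec, dotProduct, hNval, hb] using hw1
    · have := congrFun hwz j'
      simp only [Finset.sum_apply, Pi.smul_apply, smul_eq_mul, Pi.zero_apply] at this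
      simp only [Matrix.mulVec, dotProduct, hb]
      rw [if_neg (Fin.succ_ne_zero j')]
      push_cast
      simp_rw [hNval', fun i => (hzij i j').symm]
      simpa [mul_comm] using this
  -- linear independence of columns of N
  have hNinj : ∀ c : ι → ℝ, N *ᵥ c = 0 → c = 0 := by
    intro c hc
    have h0 : ∑ i, c i = 0 := by
      have := congrFun hc 0
      simpa [Matrix.mulVec, dotProduct, hNval] using this
    have hz0 : ∑ i, c i • z i = 0 := by
      funext j
      have := congrFun hc (Fin.succ j)
      simp only [Matrix.mulVec, dotProduct, Pi.zero_apply] at this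
      simp only [Finset.sum_apply, Pi.smul_apply, smul_eq_mul, Pi.zero_apply]
      simp_rw [hNval', fun i => (hzij i j).symm] at this
      simpa [mul_comm] using this
    funext i
    exact (affineIndependent_iff.mp hai Finset.univ c h0 hz0) i (Finset.mem_univ i)
  -- Gram matrix
  set Gq : Matrix ι ι ℚ := Mqᵀ * Mq with hGq
  set G : Matrix ι ι ℝ := Nᵀ * N with hG
  have hGmap : G = Gq.map (Rat.cast) := by
    rw [hG, hGq, hN, ← Matrix.transpose_map]
    exact (Matrix.map_mul (L := Mqᵀ) (M := Mq) (f := Rat.castHom ℝ)).symm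
  have hGinj : ∀ c : ι → ℝ, G *ᵥ c = 0 → c = 0 := by
    intro c hc
    have h1 : (N *ᵥ c) ⬝ᵥ (N *ᵥ c) = c ⬝ᵥ (G *ᵥ c) := by
      rw [hG, ← Matrix.mulVec_mulVec, Matrix.dotProduct_mulVec c, Matrix.vecMul_transpose]
    have h2 : (N *ᵥ c) ⬝ᵥ (N *ᵥ c) = 0 := by rw [h1, hc, dotProduct_zero]
    have h3 : N *ᵥ c = 0 := by
      funext j
      have hnn : ∀ j' ∈ Finset.univ, 0 ≤ (N *ᵥ c) j' * (N *ᵥ c) j' := fun j' _ => mul_self_nonneg _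
      have := (Finset.sum_eq_zero_iff_of_nonneg hnn).mp h2 j (Finset.mem_univ j)
      exact mul_self_eq_zero.mp this
    exact hNinj c h3
  have hGdet : G.det ≠ 0 := by
    intro h0
    obtain ⟨v, hv, hGv⟩ := (Matrix.exists_mulVec_eq_zero_iff).mpr h0
    exact hv (hGinj v hGv)
  have hGdetcast : G.det = ((Gq.det : ℚ) : ℝ) := by
    rw [hGmap]
    exact (RingHom.map_det (Rat.castHom ℝ) Gq).symm
  have hGqdet : Gq.det ≠ 0 := by
    intro h0
    apply hGdet
    rw [hGdetcast, h0, Rat.cast_zero]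
  -- rational solution
  set q : ι → ℚ := Gq⁻¹ *ᵥ (Mqᵀ *ᵥ b) with hq
  have hGq_mulVec : Gq *ᵥ q = Mqᵀ *ᵥ b := by
    rw [hq, Matrix.mulVec_mulVec, Matrix.mul_nonsing_inv _ (isUnit_iff_ne_zero.mpr hGqdet),
      Matrix.one_mulVec]
  have hweq : w = fun i => ((q i : ℚ) : ℝ) := by
    have e1 : G *ᵥ w = Nᵀ *ᵥ (N *ᵥ w) := by rw [hG, Matrix.mulVec_mulVec]
    have e2 : G *ᵥ (fun i => ((q i : ℚ) : ℝ)) = Nᵀ *ᵥ (fun j => ((b j : ℚ) : ℝ)) := by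
      rw [hGmap, mulVec_cast Gq q, hGq_mulVec]
      have hNT : Nᵀ = (Mqᵀ).map Rat.cast := by rw [hN, Matrix.transpose_map]
      rw [hNT, mulVec_cast Mqᵀ b]
    have e3 : G *ᵥ (w - fun i => ((q i : ℚ) : ℝ)) = 0 := by
      rw [Matrix.mulVec_sub, e1, hNw, e2, sub_self]
    have := hGinj _ e3
    funext i
    have := congrFun this i
    simpa [sub_eq_zero] using this
  -- rational weights are nonnegative and sum to 1
  have hq0 : ∀ i, 0 ≤ q i := by
    intro i
    have h0 := hw0 i
    rw [hweq] at h0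
    simp only at h0
    exact_mod_cast le_of_lt h0
  have hq1 : ∑ i, q i = 1 := by
    have h1 : ((∑ i, q i : ℚ) : ℝ) = 1 := by
      push_cast
      rw [hweq] at hw1
      exact hw1
    exact_mod_cast h1
  -- clear denominators
  set D : ℕ := ∏ i, (q i).den with hD
  have hDpos : 0 < D := Finset.prod_pos fun i _ => (q i).pos
  set m' : ι → ℕ := fun i => (q i).num.toNat * (D / (q i).den) with hm'def
  have hm' : ∀ i, (m' i : ℚ) = q i * D := by
    intro i
    have hdvd : (q i).den ∣ D := Finset.dvd_prod_of_mem _ (Finset.mem_univ i)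
    have hnum : (((q i).num.toNat : ℕ) : ℚ) = ((q i).num : ℚ) := by
      exact_mod_cast Int.toNat_of_nonneg (Rat.num_nonneg.mpr (hq0 i))
    have hdden : ((q i).den : ℚ) * ((D / (q i).den : ℕ) : ℚ) = (D : ℚ) := by
      exact_mod_cast congrArg (Nat.cast (R := ℚ)) (Nat.mul_div_cancel' hdvd)
    have hden0 : ((q i).den : ℚ) ≠ 0 := by
      exact_mod_cast (q i).den_nz
    calc (m' i : ℚ) = ((q i).num : ℚ) * ((D / (q i).den : ℕ) : ℚ) := by
          rw [hm'def]
          push_cast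
          rw [hnum]
      _ = (((q i).num : ℚ) / ((q i).den : ℚ)) * (((q i).den : ℚ) * ((D / (q i).den : ℕ) : ℚ)) := by
          field_simp
      _ = q i * D := by rw [Rat.num_div_den, hdden]
  -- final weights
  refine ⟨fun i0 => ∑ i, if pick i = i0 then m' i else 0, ?_, ?_, ?_⟩
  · intro i0 hne
    obtain ⟨i, _, hi⟩ := Finset.exists_ne_zero_of_sum_ne_zero hne
    by_cases hp : pick i = i0
    · exact hp ▸ hpickP i
    · simp [hp] at hi
  · have hsum : ∑ i0, (∑ i, if pick i = i0 then m' i else 0) = ∑ i, m' i := by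
      rw [Finset.sum_comm]
      refine Finset.sum_congr rfl fun i _ => ?_
      rw [Finset.sum_ite_eq]
      simp
    rw [hsum]
    have hcast : ((∑ i, m' i : ℕ) : ℚ) = D := by
      push_cast
      simp_rw [hm']
      rw [← Finset.sum_mul, hq1, one_mul]
    have hne : (∑ i, m' i : ℕ) ≠ 0 := by
      intro h0
      rw [h0] at hcast
      have hD0 : D = 0 := by exact_mod_cast hcast.symm
      omega
    exact Nat.pos_of_ne_zero hne
  · intro j
    have hswap : ∑ i0, ((∑ i, if pick i = i0 then m' i else 0 : ℕ) : ℤ) * α i0 j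
        = ∑ i : ι, (m' i : ℤ) * α (pick i) j := by
      have : ∀ i0, ((∑ i, if pick i = i0 then m' i else 0 : ℕ) : ℤ) * α i0 j
          = ∑ i : ι, (if pick i = i0 then (m' i : ℤ) * α i0 j else 0) := by
        intro i0
        push_cast
        rw [Finset.sum_mul]
        refine Finset.sum_congr rfl fun i _ => ?_
        split <;> simp
      simp_rw [this]
      rw [Finset.sum_comm]
      refine Finset.sum_congr rfl fun i _ => ?_
      have : ∀ i0, (if pick i = i0 then (m' i : ℤ) * α i0 j else 0)
          = (if pick i = i0 then (m' i : ℤ) * α (pick i) j else 0) := by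
        intro i0
        split
        · rename_i hp; rw [hp]
        · rfl
      simp_rw [this]
      rw [Finset.sum_ite_eq]
      simp
    rw [hswap]
    have hreal : ((∑ i : ι, (m' i : ℤ) * α (pick i) j : ℤ) : ℝ) = 0 := by
      push_cast
      have : ∀ i : ι, ((m' i : ℝ)) * ((α (pick i) j : ℤ) : ℝ) = (D : ℝ) * (w i * z i j) := by
        intro i
        have h1 : ((m' i : ℕ) : ℝ) = ((q i : ℚ) : ℝ) * ((D : ℕ) : ℝ) := by
          exact_mod_cast congrArg (Rat.cast (K := ℝ)) (hm' i)
        rw [h1, ← hzij i j, hweq]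
        ring
      simp_rw [this]
      rw [← Finset.mul_sum]
      have : ∑ i : ι, w i * z i j = 0 := by
        have := congrFun hwz j
        simpa using this
      rw [this, mul_zero]
    exact_mod_cast hreal

/-- Hilbert–Mumford criterion for semistability of a point under a diagonal torus
action: for the action of `T = (kˣ)^r` on `k[x_0,…,x_{n-1}]` with integer weight
vectors `α_i ∈ ℤ^r` and a nonzero point `x ∈ k^n`, there is a `T`-invariant
homogeneous polynomial of degree `≥ 1` not vanishing at `x` iff `0` lies in the
convex hull in `ℝ^r` of `{α_i : x_i ≠ 0}`. -/
theorem stmt5 (k : Type*) [Field k] [Infinite k] (n r : ℕ) (hn : 1 ≤ n) (hr : 1 ≤ r)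
    (α : Fin n → Fin r → ℤ) (x : Fin n → k) (hx : x ≠ 0) :
    (∃ f : MvPolynomial (Fin n) k, ∃ d : ℕ, 1 ≤ d ∧ f.IsHomogeneous d ∧
        (∀ t : Fin r → kˣ,
          MvPolynomial.aeval
            (fun i => (((∏ j, t j ^ α i j : kˣ) : k)) • MvPolynomial.X i) f = f) ∧
        MvPolynomial.eval x f ≠ 0) ↔
      (0 : Fin r → ℝ) ∈
        convexHull ℝ ((fun s : Fin r → ℤ => fun j => (s j : ℝ)) '' (α '' {i | x i ≠ 0})) := by
  constructor
  · rintro ⟨f, d, hd, hhom, hinv, heval⟩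
    -- find a monomial of f not vanishing at x
    rw [MvPolynomial.eval_eq'] at heval
    obtain ⟨m, hmsupp, hm⟩ := Finset.exists_ne_zero_of_sum_ne_zero heval
    have hcoeff : f.coeff m ≠ 0 := MvPolynomial.mem_support_iff.mp hmsupp
    have hprod : (∏ i, x i ^ m i) ≠ 0 := fun h0 => hm (by rw [h0, mul_zero])
    have hxi : ∀ i : Fin n, m i ≠ 0 → x i ≠ 0 := by
      intro i hmi hxi0
      exact hprod (Finset.prod_eq_zero (Finset.mem_univ i) (by rw [hxi0, zero_pow hmi]))
    have hsum : ∀ j, ∑ i, (m i : ℤ) * α i j = 0 :=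
      fun j => weight_zero_of_invariant α f hinv hcoeff j
    have hdeg : ∑ i ∈ m.support, m i = d := by
      have := hhom hcoeff
      rw [Finsupp.weight_apply] at this
      simpa [Finsupp.sum] using this
    -- center of mass
    have hmem := Finset.centerMass_mem_convexHull (t := m.support)
      (s := (fun s : Fin r → ℤ => fun j => ((s j : ℤ) : ℝ)) '' (α '' {i | x i ≠ 0}))
      (w := fun i => (m i : ℝ)) (z := fun i => fun j => ((α i j : ℤ) : ℝ))
      (fun i _ => by positivity)
      (by
        rw [show ∑ i ∈ m.support, ((m i : ℕ) : ℝ) = ((∑ i ∈ m.support, m i : ℕ) : ℝ) from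
          (Nat.cast_sum _ _).symm, hdeg]
        exact_mod_cast hd)
      (fun i hi => by
        refine ⟨α i, ⟨i, ?_, rfl⟩, rfl⟩
        exact hxi i (Finsupp.mem_support_iff.mp hi))
    have hcm : m.support.centerMass (fun i => (m i : ℝ))
        (fun i => fun j => ((α i j : ℤ) : ℝ)) = 0 := by
      rw [Finset.centerMass]
      have hz : ∑ i ∈ m.support, (m i : ℝ) • (fun j => ((α i j : ℤ) : ℝ)) = 0 := by
        funext j
        simp only [Finset.sum_apply, Pi.smul_apply, smul_eq_mul, Pi.zero_apply]
        have h1 : ∑ i ∈ m.support, (m i : ℝ) * ((α i j : ℤ) : ℝ)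
            = ∑ i, (m i : ℝ) * ((α i j : ℤ) : ℝ) := by
          apply Finset.sum_subset (Finset.subset_univ _)
          intro i _ hi
          rw [Finsupp.notMem_support_iff.mp hi]
          simp
        rw [h1]
        exact_mod_cast congrArg (fun z : ℤ => (z : ℝ)) (hsum j)
      rw [hz, smul_zero]
    rwa [hcm] at hmem
  · intro h
    obtain ⟨m, hmP, hmpos, hmw⟩ := exists_nat_weights α {i | x i ≠ 0} h
    set μ : Fin n →₀ ℕ := Finsupp.equivFunOnFinite.symm m with hμ
    have hμa : ∀ i, μ i = m i := fun i => rfl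
    refine ⟨MvPolynomial.monomial μ 1, ∑ i, m i, hmpos, ?_, ?_, ?_⟩
    · apply MvPolynomial.isHomogeneous_monomial
      rw [Finsupp.degree_apply]
      rw [show ∑ i ∈ μ.support, μ i = ∑ i, μ i from
        Finset.sum_subset (Finset.subset_univ _)
          (fun i _ hi => Finsupp.notMem_support_iff.mp hi)]
      exact Finset.sum_congr rfl fun i _ => hμa i
    · intro t
      apply MvPolynomial.ext
      intro m'
      rw [coeff_aeval_smulX]
      set c : Fin n → k := fun i => (((∏ j, t j ^ α i j : kˣ) : k)) with hc
      rcases eq_or_ne m' μ with rfl | hne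
      · have huu : (∏ i, (∏ j, t j ^ α i j) ^ m i : kˣ) = 1 := by
          have h1 : ∀ i : Fin n, (∏ j, t j ^ α i j) ^ m i = ∏ j, t j ^ (α i j * (m i : ℤ)) := by
            intro i
            rw [← Finset.prod_pow]
            refine Finset.prod_congr rfl fun j _ => ?_
            rw [← zpow_natCast (t j ^ α i j) (m i), ← _root_.zpow_mul]
          simp_rw [h1]
          rw [Finset.prod_comm]
          have h2 : ∀ j : Fin r, ∏ i, t j ^ (α i j * (m i : ℤ)) = 1 := by
            intro j
            rw [prod_zpow_eq_zpow_sum]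
            have : ∑ i, α i j * (m i : ℤ) = 0 := by
              rw [← hmw j]
              exact Finset.sum_congr rfl fun i _ => mul_comm _ _
            rw [this, zpow_zero]
          simp_rw [h2]
          exact Finset.prod_const_one
        have hck : ∏ i, c i ^ μ i = 1 := by
          have := congrArg (Units.val) huu
          push_cast at this
          simpa [hc, hμa] using this
        rw [hck, one_mul]
      · rw [MvPolynomial.coeff_monomial, if_neg (fun hh : μ = m' => hne hh.symm), mul_zero]
    · rw [MvPolynomial.eval_monomial, one_mul, Finsupp.prod]
      apply Finset.prod_ne_zero_iff.mpr
      intro i hi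
      have hmi : m i ≠ 0 := by simpa [hμa] using Finsupp.mem_support_iff.mp hi
      exact pow_ne_zero _ (hmP i hmi)
end

section
/- Let k be a field, let n, r ≥ 1, and let α_0, …, α_{n−1} ∈ ℤ^r. Then the k-subalgebra of k[x_0, …, x_{n−1}] spanned by all monomials x^β with Σ_i β_i α_i = 0 in ℤ^r is finitely generated as a k-algebra. -/
open MvPolynomial

/-- Gordan-type lemma: a "full" submonoid of `Fin n →₀ ℕ` is finitely generated. -/
lemma gordan_aux {n : ℕ} (S : AddSubmonoid (Fin n →₀ ℕ))
    (hfull : ∀ x y : Fin n →₀ ℕ, x + y ∈ S → x ∈ S → y ∈ S) : S.FG := by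
  classical
  -- the set of minimal nonzero elements of S
  set M : Set (Fin n →₀ ℕ) :=
    {s | s ∈ S ∧ s ≠ 0 ∧ ∀ t : Fin n →₀ ℕ, t ∈ S → t ≠ 0 → t ≤ s → t = s} with hM
  have hMfin : M.Finite := by
    by_contra hinf
    have hinf' : M.Infinite := hinf
    let e := hinf'.natEmbedding
    obtain ⟨m, n', hmn, hle⟩ := wellQuasiOrdered_le (fun i => (e i : Fin n →₀ ℕ))
    have hne : ((e m : Fin n →₀ ℕ)) ≠ (e n' : Fin n →₀ ℕ) := by
      intro h
      exact (Nat.ne_of_lt hmn) (e.injective (Subtype.ext h))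
    have h2 := (e n').2
    exact hne (h2.2.2 _ (e m).2.1 (e m).2.2.1 hle)
  refine ⟨hMfin.toFinset, le_antisymm ?_ ?_⟩
  · rw [AddSubmonoid.closure_le]
    intro x hx
    simp only [Set.Finite.coe_toFinset] at hx
    exact hx.1
  · intro s hs
    -- strong induction on the total degree
    generalize hd : (∑ i, s i) = d
    induction d using Nat.strong_induction_on generalizing s with
    | _ d ih =>
      by_cases hs0 : s = 0
      · subst hs0; exact AddSubmonoid.zero_mem _
      · -- pick t ∈ S, t ≠ 0, t ≤ s with minimal total degree
        have hex : ∃ m : ℕ, ∃ t : Fin n →₀ ℕ, t ∈ S ∧ t ≠ 0 ∧ t ≤ s ∧ (∑ i, t i) = m :=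
          ⟨∑ i, s i, s, hs, hs0, le_refl s, rfl⟩
        obtain ⟨m, hm⟩ := hex
        obtain ⟨t, htS, ht0, hts, htm⟩ :=
          Nat.find_spec (⟨m, hm⟩ : ∃ m, ∃ t : Fin n →₀ ℕ, t ∈ S ∧ t ≠ 0 ∧ t ≤ s ∧ (∑ i, t i) = m)
        set m₀ := Nat.find (⟨m, hm⟩ : ∃ m, ∃ t : Fin n →₀ ℕ, t ∈ S ∧ t ≠ 0 ∧ t ≤ s ∧ (∑ i, t i) = m)
        -- t is minimal in S
        have htM : t ∈ M := by
          refine ⟨htS, ht0, fun u huS hu0 hut => ?_⟩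
          have hus : u ≤ s := le_trans hut hts
          have hmin : m₀ ≤ ∑ i, u i :=
            Nat.find_le ⟨u, huS, hu0, hus, rfl⟩
          have hsum_le : ∀ i ∈ Finset.univ, u i ≤ t i := fun i _ => hut i
          have hsum : ∑ i, u i = ∑ i, t i :=
            le_antisymm (Finset.sum_le_sum hsum_le) (htm ▸ hmin)
          ext i
          exact (Finset.sum_eq_sum_iff_of_le hsum_le).mp hsum i (Finset.mem_univ i)
        have hrest : s - t ∈ S := hfull t (s - t) (by rwa [add_tsub_cancel_of_le hts]) htS
        have ht_pos : 0 < ∑ i, t i := by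
          rcases (Finsupp.ne_iff.mp ht0) with ⟨i, hi⟩
          have : 0 < t i := Nat.pos_of_ne_zero (by simpa using hi)
          exact lt_of_lt_of_le this (Finset.single_le_sum (fun j _ => Nat.zero_le _)
            (Finset.mem_univ i))
        have hsub_sum : ∑ i, (s - t) i = d - ∑ i, t i := by
          have hco : ∀ i, (s - t) i = s i - t i := fun i => Finsupp.tsub_apply s t i
          simp_rw [hco]
          rw [Finset.sum_tsub_distrib Finset.univ (fun i _ => hts i), hd]
        have hlt : (∑ i, (s - t) i) < d := by
          rw [hsub_sum]
          have hd_pos : 0 < d := lt_of_lt_of_le ht_pos (hd ▸ Finset.sum_le_sum fun i _ => hts i)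
          omega
        have hrec : s - t ∈ AddSubmonoid.closure (hMfin.toFinset : Set (Fin n →₀ ℕ)) :=
          ih _ hlt hrest rfl
        have htc : t ∈ AddSubmonoid.closure (hMfin.toFinset : Set (Fin n →₀ ℕ)) :=
          AddSubmonoid.subset_closure (by simpa using htM)
        have := AddSubmonoid.add_mem _ htc hrec
        rwa [add_tsub_cancel_of_le hts] at this

/-- Finite generation of the invariants of a diagonal torus action: the
`k`-subalgebra of `k[x_0,…,x_{n-1}]` spanned (as a subalgebra, equivalently as the
linear span, since the set of such monomials is multiplicatively closed and
contains 1) by the monomials `x^β` of weight `∑ i, β i • α i = 0` is finitely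
generated as a `k`-algebra. -/
theorem stmt6 (k : Type*) [Field k] (n r : ℕ) (hn : 1 ≤ n) (hr : 1 ≤ r)
    (α : Fin n → Fin r → ℤ) :
    (Algebra.adjoin k {f : MvPolynomial (Fin n) k |
        ∃ β : Fin n →₀ ℕ, (∑ i, β i • α i = (0 : Fin r → ℤ)) ∧
          f = MvPolynomial.monomial β 1}).FG := by
  classical
  set S : AddSubmonoid (Fin n →₀ ℕ) :=
    { carrier := {β | ∑ i, β i • α i = (0 : Fin r → ℤ)}
      add_mem' := by
        intro a b ha hb
        simp only [Set.mem_setOf_eq, Finsupp.add_apply] at *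
        rw [show (∑ i, (a i + b i) • α i) = (∑ i, a i • α i) + ∑ i, b i • α i by
          rw [← Finset.sum_add_distrib]; exact Finset.sum_congr rfl fun i _ => add_smul _ _ _]
        rw [ha, hb, add_zero]
      zero_mem' := by
        simp only [Set.mem_setOf_eq, Finsupp.coe_zero, Pi.zero_apply, zero_smul,
          Finset.sum_const_zero] } with hSdef
  have hfull : ∀ x y : Fin n →₀ ℕ, x + y ∈ S → x ∈ S → y ∈ S := by
    intro x y hxy hx
    simp only [hSdef, AddSubmonoid.mem_mk, AddSubsemigroup.mem_mk, Set.mem_setOf_eq,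
      Finsupp.add_apply] at *
    rw [show (∑ i, (x i + y i) • α i) = (∑ i, x i • α i) + ∑ i, y i • α i by
      rw [← Finset.sum_add_distrib]; exact Finset.sum_congr rfl fun i _ => add_smul _ _ _,
      hx, zero_add] at hxy
    exact hxy
  obtain ⟨F, hF⟩ := gordan_aux S hfull
  refine ⟨F.image (fun β => MvPolynomial.monomial β (1 : k)), le_antisymm ?_ ?_⟩
  · rw [Algebra.adjoin_le_iff]
    intro f hf
    simp only [Finset.coe_image, Set.mem_image, Finset.mem_coe] at hf
    obtain ⟨β, hβF, rfl⟩ := hf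
    have hβS : β ∈ S := hF ▸ AddSubmonoid.subset_closure hβF
    exact Algebra.subset_adjoin ⟨β, hβS, rfl⟩
  · rw [Algebra.adjoin_le_iff]
    rintro f ⟨β, hβ, rfl⟩
    have hβS : β ∈ AddSubmonoid.closure (F : Set (Fin n →₀ ℕ)) := by rw [hF]; exact hβ
    clear hβ
    induction hβS using AddSubmonoid.closure_induction with
    | mem x hx =>
        exact Algebra.subset_adjoin (by
          simp only [Finset.coe_image, Set.mem_image, Finset.mem_coe]
          exact ⟨x, hx, rfl⟩)
    | zero =>
        simpa using (Algebra.adjoin k _).one_mem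
    | add a b _ _ ha hb =>
        rw [show MvPolynomial.monomial (a + b) (1 : k)
            = MvPolynomial.monomial a 1 * MvPolynomial.monomial b 1 by
          rw [MvPolynomial.monomial_mul, one_mul]]
        exact mul_mem ha hb
end

section
/- Let k be a field of characteristic zero, n ≥ 1, and let N be a nilpotent n × n matrix over k. For a ∈ k set exp(aN) = Σ_{m ≥ 0} (a^m / m!) N^m, a finite sum since N is nilpotent. Then there exists a group homomorphism ρ : SL(2, k) → GL(n, k) such that for every a ∈ k, ρ applied to the upper unitriangular matrix [[1, a], [0, 1]] equals exp(aN). -/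
open scoped MatrixGroups DirectSum

noncomputable section SL2Rep

variable (k : Type*) [Field k]

def texp {A : Type*} [Ring A] [Algebra k A] (x : A) (K : ℕ) : A :=
  ∑ m ∈ Finset.range K, ((m.factorial : k)⁻¹) • x ^ m

/-- Quotient of `k[X]` by the span of `X^e`, as a module. -/
abbrev QX (e : ℕ) : Type _ :=
  Polynomial k ⧸ (Submodule.span (Polynomial k) {(Polynomial.X : Polynomial k) ^ e})

/-- Multiplication by `X` on `QX k e`, as a `k`-linear endomorphism. -/
def fQ (e : ℕ) : Module.End k (QX k e) :=
  (LinearMap.lsmul (Polynomial k) (QX k e) Polynomial.X).restrictScalars k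

variable {k}

lemma fQ_apply {e : ℕ} (q : QX k e) : fQ k e q = (Polynomial.X : Polynomial k) • q := rfl

lemma mk_X_pow_eq_zero {e m : ℕ} (h : e ≤ m) :
    (Submodule.Quotient.mk (Polynomial.X ^ m) : QX k e) = 0 := by
  rw [Submodule.Quotient.mk_eq_zero]
  refine Submodule.mem_span_singleton.mpr ⟨Polynomial.X ^ (m - e), ?_⟩
  rw [smul_eq_mul, ← pow_add]
  congr 1
  omega

lemma fQ_pow_mk {e m : ℕ} (j : ℕ) :
    (fQ k e ^ j) (Submodule.Quotient.mk (Polynomial.X ^ m) : QX k e) =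
      Submodule.Quotient.mk (Polynomial.X ^ (m + j)) := by
  induction j generalizing m with
  | zero => simp
  | succ j ih =>
    rw [pow_succ, Module.End.mul_apply]
    have h1 : fQ k e (Submodule.Quotient.mk (Polynomial.X ^ m) : QX k e)
        = Submodule.Quotient.mk (Polynomial.X ^ (m + 1)) := by
      rw [fQ_apply, ← Submodule.Quotient.mk_smul, smul_eq_mul, ← pow_succ']
    rw [h1, ih]
    congr 2
    omega

lemma QX_ext {e : ℕ} {W : Type*} [AddCommGroup W] [Module k W] {f g : QX k e →ₗ[k] W}
    (h : ∀ m : ℕ, f (Submodule.Quotient.mk (Polynomial.X ^ m))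
      = g (Submodule.Quotient.mk (Polynomial.X ^ m))) : f = g := by
  have key : f.comp (((Submodule.span (Polynomial k)
        {(Polynomial.X : Polynomial k) ^ e}).mkQ).restrictScalars k)
      = g.comp (((Submodule.span (Polynomial k)
        {(Polynomial.X : Polynomial k) ^ e}).mkQ).restrictScalars k) := by
    apply Polynomial.lhom_ext'
    intro n
    apply LinearMap.ext
    intro c
    have hc : (Polynomial.monomial n c : Polynomial k) = c • Polynomial.X ^ n := by
      rw [Polynomial.smul_eq_C_mul, Polynomial.C_mul_X_pow_eq_monomial]
    simp only [LinearMap.comp_apply, LinearMap.coe_restrictScalars, Submodule.mkQ_apply, hc,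
      map_smul]
    rw [h n]
  apply LinearMap.ext
  intro x
  obtain ⟨p, rfl⟩ := Submodule.Quotient.mk_surjective _ x
  exact congrArg (fun (F : Polynomial k →ₗ[k] W) => F p) key

lemma fQ_pow_self (d : ℕ) : fQ k (d + 1) ^ (d + 1) = 0 := by
  refine QX_ext (fun m => ?_)
  rw [fQ_pow_mk, mk_X_pow_eq_zero (show d + 1 ≤ m + (d+1) by omega)]
  simp

/-- Exponent vector `(m, d-m)`. -/
def exps (d m : ℕ) : Fin 2 →₀ ℕ := Finsupp.single 0 m + Finsupp.single 1 (d - m)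

variable (k) in
/-- The monomial `X₀^m X₁^(d-m)`. -/
def mono (d m : ℕ) : MvPolynomial (Fin 2) k := MvPolynomial.monomial (exps d m) 1

lemma exps_inj {d m m' : ℕ} (h : exps d m = exps d m') : m = m' := by
  have := congrArg (fun f => f (0 : Fin 2)) h
  simpa [exps] using this

lemma mono_eq (d m : ℕ) :
    mono k d m = MvPolynomial.X 0 ^ m * MvPolynomial.X 1 ^ (d - m) := by
  rw [MvPolynomial.X_pow_eq_monomial, MvPolynomial.X_pow_eq_monomial,
    MvPolynomial.monomial_mul, one_mul]
  rfl

lemma coeff_mono (d m m' : ℕ) :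
    MvPolynomial.coeff (exps d m') (mono k d m) = if m' = m then (1 : k) else 0 := by
  rw [mono, MvPolynomial.coeff_monomial]
  by_cases h : m' = m
  · subst h; simp
  · rw [if_neg, if_neg h]
    intro hc
    exact h (exps_inj hc.symm)

variable (k) in
def psi (d : ℕ) : Polynomial k →ₗ[k] MvPolynomial (Fin 2) k :=
  ∑ m ∈ Finset.range (d + 1),
    (LinearMap.toSpanSingleton k _ ((d.descFactorial m : k) • mono k d m)).comp
      (Polynomial.lcoeff k m)

lemma psi_apply (d : ℕ) (p : Polynomial k) :
    psi k d p = ∑ m ∈ Finset.range (d + 1),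
      p.coeff m • ((d.descFactorial m : k) • mono k d m) := by
  simp [psi, LinearMap.sum_apply, LinearMap.toSpanSingleton_apply]

lemma psi_X_pow_of_le {d n : ℕ} (h : n ≤ d) :
    psi k d (Polynomial.X ^ n) = (d.descFactorial n : k) • mono k d n := by
  rw [psi_apply, Finset.sum_eq_single_of_mem n (Finset.mem_range.mpr (by omega))]
  · simp [Polynomial.coeff_X_pow]
  · intro m _ hm
    simp [Polynomial.coeff_X_pow, hm]

lemma psi_X_pow_of_gt {d n : ℕ} (h : d < n) : psi k d (Polynomial.X ^ n) = 0 := by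
  rw [psi_apply]
  apply Finset.sum_eq_zero
  intro m hm
  rw [Finset.mem_range] at hm
  have : m ≠ n := by omega
  simp [Polynomial.coeff_X_pow, this]

variable (k) in
def iota (d : ℕ) : QX k (d + 1) →ₗ[k] MvPolynomial (Fin 2) k :=
  (Submodule.liftQ ((Submodule.span (Polynomial k)
      {(Polynomial.X : Polynomial k) ^ (d + 1)}).restrictScalars k) (psi k d)
    (by
      intro r hr
      rw [Submodule.restrictScalars_mem, Submodule.mem_span_singleton] at hr
      obtain ⟨c, hc⟩ := hr
      have hdvd : (Polynomial.X : Polynomial k) ^ (d + 1) ∣ r := ⟨c, by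
        rw [← hc, smul_eq_mul, mul_comm]⟩
      rw [Polynomial.X_pow_dvd_iff] at hdvd
      rw [LinearMap.mem_ker, psi_apply]
      apply Finset.sum_eq_zero
      intro m hm
      rw [Finset.mem_range] at hm
      rw [hdvd m hm, zero_smul])).comp
    (Submodule.Quotient.restrictScalarsEquiv k _).symm.toLinearMap

lemma iota_mk (d : ℕ) (p : Polynomial k) :
    iota k d (Submodule.Quotient.mk p) = psi k d p := by
  simp only [iota, LinearMap.comp_apply, LinearEquiv.coe_toLinearMap]
  rw [show (Submodule.Quotient.mk p : QX k (d+1))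
      = Submodule.Quotient.mk p from rfl,
    Submodule.Quotient.restrictScalarsEquiv_symm_mk, Submodule.liftQ_apply]

variable (k) in
abbrev uMat (a : k) : Matrix (Fin 2) (Fin 2) k := !![1, a; 0, 1]

variable (k) in
def SLcoe : Matrix.SpecialLinearGroup (Fin 2) k →* Matrix (Fin 2) (Fin 2) k where
  toFun g := g
  map_one' := by simp
  map_mul' := by simp

variable (k) in
def PhiFun (M : Matrix (Fin 2) (Fin 2) k) : Module.End k (MvPolynomial (Fin 2) k) :=
  (MvPolynomial.aeval (fun i => ∑ j, M j i • MvPolynomial.X j)).toLinearMap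

lemma PhiFun_X (M : Matrix (Fin 2) (Fin 2) k) (i : Fin 2) :
    PhiFun k M (MvPolynomial.X i) = ∑ j, M j i • MvPolynomial.X j := by
  simp [PhiFun]

open MvPolynomial in
lemma PhiFun_mul (M M' : Matrix (Fin 2) (Fin 2) k) :
    PhiFun k (M * M') = PhiFun k M * PhiFun k M' := by
  have h : (MvPolynomial.aeval (fun i => ∑ j, (M * M') j i • MvPolynomial.X j) :
        MvPolynomial (Fin 2) k →ₐ[k] MvPolynomial (Fin 2) k) =
      ((MvPolynomial.aeval (fun i => ∑ j, M j i • MvPolynomial.X j)).comp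
        (MvPolynomial.aeval (fun i => ∑ j, M' j i • MvPolynomial.X j))) := by
    apply MvPolynomial.algHom_ext
    intro i
    simp only [AlgHom.comp_apply, aeval_X, map_sum, map_smul]
    simp only [aeval_X, Matrix.mul_apply, Fin.sum_univ_two, smul_add, smul_smul,
      MvPolynomial.smul_eq_C_mul, map_add, map_mul]
    ring
  apply LinearMap.ext
  intro p
  have := congrArg (fun (φ : MvPolynomial (Fin 2) k →ₐ[k] MvPolynomial (Fin 2) k) => φ p) h
  simpa [PhiFun] using this

open MvPolynomial in
lemma PhiFun_one : PhiFun k (1 : Matrix (Fin 2) (Fin 2) k) = 1 := by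
  have h : (MvPolynomial.aeval
        (fun i => ∑ j, (1 : Matrix (Fin 2) (Fin 2) k) j i • MvPolynomial.X j) :
        MvPolynomial (Fin 2) k →ₐ[k] MvPolynomial (Fin 2) k) = AlgHom.id k _ := by
    apply MvPolynomial.algHom_ext
    intro i
    fin_cases i <;> simp [Fin.sum_univ_two, Matrix.one_apply]
  apply LinearMap.ext
  intro p
  have := congrArg (fun (φ : MvPolynomial (Fin 2) k →ₐ[k] MvPolynomial (Fin 2) k) => φ p) h
  simpa [PhiFun] using this

variable (k) in
/-- Span of the monomials of degree `d`. -/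
def SpanMono (d : ℕ) : Submodule k (MvPolynomial (Fin 2) k) :=
  Submodule.span k ((fun m => mono k d m) '' Set.Iic d)

lemma mono_mem (d m : ℕ) (hm : m ≤ d) : mono k d m ∈ SpanMono k d :=
  Submodule.subset_span ⟨m, hm, rfl⟩

lemma natCast_eq_smul_one (K : Type*) [Field K] (A : Type*) [CommRing A] [Algebra K A] (n : ℕ) :
    ((n : ℕ) : A) = ((n : K)) • (1 : A) := by
  rw [← Algebra.algebraMap_eq_smul_one, map_natCast]

lemma linpow_mem (d : ℕ) (α β γ δ : k) (p q : ℕ) (hpq : p + q = d) :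
    ((α • MvPolynomial.X 0 + β • MvPolynomial.X 1 : MvPolynomial (Fin 2) k) ^ p *
      (γ • MvPolynomial.X 0 + δ • MvPolynomial.X 1) ^ q) ∈ SpanMono k d := by
  rw [add_pow, add_pow, Finset.sum_mul_sum]
  apply Submodule.sum_mem
  intro i hi
  apply Submodule.sum_mem
  intro j hj
  rw [Finset.mem_range] at hi hj
  have hij : i + j ≤ d := by omega
  have key : (α • MvPolynomial.X 0) ^ i * (β • MvPolynomial.X 1) ^ (p - i) * ((p.choose i : ℕ) : MvPolynomial (Fin 2) k) *
        ((γ • MvPolynomial.X 0) ^ j * (δ • MvPolynomial.X 1) ^ (q - j) * ((q.choose j : ℕ) : MvPolynomial (Fin 2) k))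
      = (α ^ i * β ^ (p - i) * γ ^ j * δ ^ (q - j) * (p.choose i : k) * (q.choose j : k)) •
          mono k d (i + j) := by
    rw [mono_eq]
    have h2 : d - (i + j) = (p - i) + (q - j) := by omega
    rw [h2]
    rw [natCast_eq_smul_one k _ (p.choose i), natCast_eq_smul_one k _ (q.choose j)]
    simp only [MvPolynomial.smul_eq_C_mul, map_mul, map_pow, mul_pow, mul_one, pow_add]
    ring
  rw [key]
  exact Submodule.smul_mem _ _ (mono_mem d (i + j) hij)

lemma PhiFun_mono (M : Matrix (Fin 2) (Fin 2) k) (d m : ℕ) :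
    PhiFun k M (mono k d m) =
      (M 0 0 • MvPolynomial.X 0 + M 1 0 • MvPolynomial.X 1) ^ m *
        (M 0 1 • MvPolynomial.X 0 + M 1 1 • MvPolynomial.X 1) ^ (d - m) := by
  rw [mono_eq]
  simp [PhiFun, map_mul, map_pow, MvPolynomial.aeval_X, Fin.sum_univ_two]

lemma PhiFun_mem (M : Matrix (Fin 2) (Fin 2) k) (d : ℕ) {x : MvPolynomial (Fin 2) k}
    (hx : x ∈ SpanMono k d) : PhiFun k M x ∈ SpanMono k d := by
  induction hx using Submodule.span_induction with
  | mem y hy =>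
    obtain ⟨m, hm, rfl⟩ := hy
    rw [PhiFun_mono]
    rw [Set.mem_Iic] at hm
    exact linpow_mem d _ _ _ _ m (d - m) (by omega)
  | zero => simp
  | add y z _ _ hy hz => rw [map_add]; exact Submodule.add_mem _ hy hz
  | smul c y _ hy => rw [map_smul]; exact Submodule.smul_mem _ _ hy

variable (k) in
def piB (d : ℕ) : MvPolynomial (Fin 2) k →ₗ[k] QX k (d + 1) :=
  ∑ m ∈ Finset.range (d + 1),
    (LinearMap.toSpanSingleton k _ (((d.descFactorial m : k))⁻¹ •
        (Submodule.Quotient.mk (Polynomial.X ^ m) : QX k (d + 1)))).comp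
      (MvPolynomial.lcoeff k (exps d m))

lemma piB_mono (d m : ℕ) (hm : m ≤ d) :
    piB k d (mono k d m) = (d.descFactorial m : k)⁻¹ •
      (Submodule.Quotient.mk (Polynomial.X ^ m) : QX k (d + 1)) := by
  rw [piB, LinearMap.sum_apply,
    Finset.sum_eq_single_of_mem m (Finset.mem_range.mpr (by omega))]
  · simp [MvPolynomial.lcoeff_apply, coeff_mono]
  · intro b _ hb
    simp [MvPolynomial.lcoeff_apply, coeff_mono, hb]

lemma iota_mem (d : ℕ) (v : QX k (d + 1)) : iota k d v ∈ SpanMono k d := by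
  obtain ⟨p, rfl⟩ := Submodule.Quotient.mk_surjective _ v
  rw [iota_mk, psi_apply]
  apply Submodule.sum_mem
  intro m hm
  rw [Finset.mem_range] at hm
  exact Submodule.smul_mem _ _ (Submodule.smul_mem _ _ (mono_mem d m (by omega)))

variable [CharZero k]

lemma descFactorial_ne_zero {d m : ℕ} (hm : m ≤ d) : ((d.descFactorial m : k)) ≠ 0 := by
  have := Nat.descFactorial_eq_zero_iff_lt (n := d) (k := m)
  have hpos : d.descFactorial m ≠ 0 := by
    intro h
    exact absurd (this.mp h) (by omega)
  exact_mod_cast Nat.cast_ne_zero.mpr hpos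

lemma iota_piB (d : ℕ) {x : MvPolynomial (Fin 2) k} (hx : x ∈ SpanMono k d) :
    iota k d (piB k d x) = x := by
  induction hx using Submodule.span_induction with
  | mem y hy =>
    obtain ⟨m, hm, rfl⟩ := hy
    rw [piB_mono d m hm, map_smul, iota_mk, psi_X_pow_of_le hm, smul_smul,
      inv_mul_cancel₀ (descFactorial_ne_zero hm), one_smul]
  | zero => simp
  | add y z _ _ hy hz => rw [map_add, map_add, hy, hz]
  | smul c y _ hy => rw [map_smul, map_smul, hy]

variable (k) in
def rhoB (d : ℕ) (M : Matrix (Fin 2) (Fin 2) k) : Module.End k (QX k (d + 1)) :=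
  (piB k d) ∘ₗ (PhiFun k M) ∘ₗ (iota k d)

lemma rhoB_one (d : ℕ) : rhoB k d 1 = 1 := by
  refine QX_ext (fun m => ?_)
  by_cases hm : m ≤ d
  · simp only [rhoB, LinearMap.comp_apply, PhiFun_one, Module.End.one_apply]
    rw [iota_mk, psi_X_pow_of_le hm, map_smul, piB_mono d m hm, smul_smul,
      mul_inv_cancel₀ (descFactorial_ne_zero hm), one_smul]
  · rw [mk_X_pow_eq_zero (by omega), map_zero, map_zero]

lemma rhoB_mul (d : ℕ) (M M' : Matrix (Fin 2) (Fin 2) k) :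
    rhoB k d (M * M') = rhoB k d M * rhoB k d M' := by
  apply LinearMap.ext
  intro v
  simp only [rhoB, LinearMap.comp_apply, Module.End.mul_apply, PhiFun_mul]
  rw [iota_piB d (PhiFun_mem M' d (iota_mem d v))]

variable (k) in
def rhoBHom (d : ℕ) : Matrix (Fin 2) (Fin 2) k →* Module.End k (QX k (d + 1)) where
  toFun := rhoB k d
  map_one' := rhoB_one d
  map_mul' := rhoB_mul d

variable (k) in
def rhoBlock (d : ℕ) : Matrix.SpecialLinearGroup (Fin 2) k →* (Module.End k (QX k (d + 1)))ˣ :=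
  ((rhoBHom k d).comp (SLcoe k)).toHomUnits

lemma texp_eq_of_le {A : Type*} [Ring A] [Algebra k A] {x : A} {K L : ℕ}
    (hK : x ^ K = 0) (h : K ≤ L) : texp k x L = texp k x K := by
  refine (Finset.sum_subset (Finset.range_subset_range.2 h) ?_).symm
  intro m _ hm
  rw [Finset.mem_range, not_lt] at hm
  have hx : x ^ m = 0 := by
    rw [← Nat.add_sub_cancel' hm, pow_add, hK, zero_mul]
  rw [hx, smul_zero]

lemma texp_eq {A : Type*} [Ring A] [Algebra k A] {x : A} {K L : ℕ}
    (hK : x ^ K = 0) (hL : x ^ L = 0) : texp k x K = texp k x L := by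
  rcases le_total K L with h | h
  · rw [texp_eq_of_le hK h]
  · rw [texp_eq_of_le hL h]

lemma map_texp {A B : Type*} [Ring A] [Algebra k A] [Ring B] [Algebra k B]
    (φ : A ≃ₐ[k] B) (x : A) (K : ℕ) : φ (texp k x K) = texp k (φ x) K := by
  simp only [texp, map_sum, map_smul, map_pow]

lemma scalar_id {d m j : ℕ} (h : m + j ≤ d) :
    (d.descFactorial m : k) * (((d - m).choose j : k) * ((d.descFactorial (m + j) : k))⁻¹)
      = ((j.factorial : k))⁻¹ := by
  have h1 := Nat.descFactorial_mul_descFactorial (k := m) (m := m + j) (n := d)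
    (Nat.le_add_right m j)
  rw [Nat.add_sub_cancel_left] at h1
  have hnat : d.descFactorial (m + j) = j.factorial * ((d - m).choose j * d.descFactorial m) := by
    rw [← h1, Nat.descFactorial_eq_factorial_mul_choose]
    ring
  have hj : (j.factorial : k) ≠ 0 := Nat.cast_ne_zero.mpr j.factorial_ne_zero
  have hc : (((d - m).choose j : k)) ≠ 0 :=
    Nat.cast_ne_zero.mpr (Nat.choose_pos (by omega)).ne'
  have hdm : ((d.descFactorial m : k)) ≠ 0 := descFactorial_ne_zero (by omega)
  rw [hnat]
  push_cast
  field_simp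

lemma rhoB_uMat (d : ℕ) (a : k) :
    rhoB k d (uMat k a) = texp k (a • fQ k (d + 1)) (d + 1) := by
  refine QX_ext (fun m => ?_)
  by_cases hm : m ≤ d
  case neg => rw [mk_X_pow_eq_zero (by omega), map_zero, map_zero]
  have hRHS : (texp k (a • fQ k (d + 1)) (d + 1))
        (Submodule.Quotient.mk (Polynomial.X ^ m)) =
      ∑ j ∈ Finset.range (d + 1), (((j.factorial : k))⁻¹ * a ^ j) •
        (Submodule.Quotient.mk (Polynomial.X ^ (m + j)) : QX k (d + 1)) := by
    rw [texp, LinearMap.sum_apply]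
    apply Finset.sum_congr rfl
    intro j _
    rw [LinearMap.smul_apply, smul_pow, LinearMap.smul_apply, fQ_pow_mk, smul_smul]
  have hL1 : (rhoB k d (uMat k a)) (Submodule.Quotient.mk (Polynomial.X ^ m)) =
      (d.descFactorial m : k) • piB k d (PhiFun k (uMat k a) (mono k d m)) := by
    rw [rhoB]
    simp only [LinearMap.comp_apply]
    rw [iota_mk, psi_X_pow_of_le hm, map_smul, map_smul]
  have hu : PhiFun k (uMat k a) (mono k d m)
      = MvPolynomial.X 0 ^ m * (a • MvPolynomial.X 0 + MvPolynomial.X 1) ^ (d - m) := by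
    rw [PhiFun_mono]
    have h00 : uMat k a 0 0 = 1 := rfl
    have h10 : uMat k a 1 0 = 0 := rfl
    have h01 : uMat k a 0 1 = a := rfl
    have h11 : uMat k a 1 1 = 1 := rfl
    rw [h00, h10, h01, h11, one_smul, zero_smul, add_zero, one_smul]
  have hexp : MvPolynomial.X 0 ^ m * (a • MvPolynomial.X 0 + MvPolynomial.X 1) ^ (d - m)
      = ∑ j ∈ Finset.range (d - m + 1),
          (a ^ j * ((d - m).choose j : k)) • mono k d (m + j) := by
    rw [add_pow, Finset.mul_sum]
    apply Finset.sum_congr rfl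
    intro j hj
    rw [Finset.mem_range] at hj
    rw [mono_eq]
    have h2 : d - (m + j) = (d - m) - j := by omega
    rw [h2, natCast_eq_smul_one k _ ((d - m).choose j)]
    simp only [MvPolynomial.smul_eq_C_mul, map_mul, map_pow, mul_pow, mul_one]
    ring
  have hfin : (rhoB k d (uMat k a)) (Submodule.Quotient.mk (Polynomial.X ^ m)) =
      ∑ j ∈ Finset.range (d - m + 1), (((j.factorial : k))⁻¹ * a ^ j) •
        (Submodule.Quotient.mk (Polynomial.X ^ (m + j)) : QX k (d + 1)) := by
    rw [hL1, hu, hexp, map_sum, Finset.smul_sum]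
    apply Finset.sum_congr rfl
    intro j hj
    rw [Finset.mem_range] at hj
    rw [map_smul, piB_mono d (m + j) (by omega), smul_smul, smul_smul]
    congr 1
    rw [← scalar_id (d := d) (m := m) (j := j) (by omega)]
    ring
  rw [hfin, hRHS]
  apply Finset.sum_subset (Finset.range_subset_range.mpr (by omega))
  intro j hj hnj
  rw [Finset.mem_range] at hj hnj
  rw [mk_X_pow_eq_zero (by omega), smul_zero]

lemma exists_block_rep (e : ℕ) :
    ∃ ρ : Matrix.SpecialLinearGroup (Fin 2) k →* (Module.End k (QX k e))ˣ,
      ∀ (a : k) (g : Matrix.SpecialLinearGroup (Fin 2) k),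
        (↑g : Matrix (Fin 2) (Fin 2) k) = uMat k a →
        ∀ K : ℕ, (fQ k e) ^ K = 0 →
          (ρ g).val = texp k (a • fQ k e) K := by
  cases e with
  | zero =>
    have htop : (Submodule.span (Polynomial k) {(Polynomial.X : Polynomial k) ^ 0}) = ⊤ := by
      rw [pow_zero]
      exact Ideal.span_singleton_one
    haveI hsub : Subsingleton (QX k 0) :=
      (Submodule.Quotient.subsingleton_iff).mpr htop
    haveI : Subsingleton (Module.End k (QX k 0)) :=
      ⟨fun f g => LinearMap.ext fun x => Subsingleton.elim _ _⟩
    exact ⟨1, fun a g hg K hK => Subsingleton.elim _ _⟩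
  | succ d =>
    refine ⟨rhoBlock k d, ?_⟩
    intro a g hg K hK
    have h1 : (rhoBlock k d g).val = rhoB k d (uMat k a) := by
      rw [show rhoBlock k d = ((rhoBHom k d).comp (SLcoe k)).toHomUnits from rfl,
        MonoidHom.coe_toHomUnits]
      show rhoB k d (SLcoe k g) = _
      rw [show SLcoe k g = (↑g : Matrix (Fin 2) (Fin 2) k) from rfl, hg]
    rw [h1, rhoB_uMat]
    exact texp_eq (by rw [smul_pow, fQ_pow_self, smul_zero])
      (by rw [smul_pow, hK, smul_zero])

variable (k) in
abbrev SpecRep {V : Type*} [AddCommGroup V] [Module k V] (f : Module.End k V)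
    (ρ : Matrix.SpecialLinearGroup (Fin 2) k →* (Module.End k V)ˣ) : Prop :=
  ∀ (a : k) (g : Matrix.SpecialLinearGroup (Fin 2) k),
    (↑g : Matrix (Fin 2) (Fin 2) k) = uMat k a →
    ∀ K : ℕ, f ^ K = 0 → (ρ g).val = texp k (a • f) K

variable (k) in
def endCongr {V W : Type*} [AddCommGroup V] [Module k V] [AddCommGroup W] [Module k W]
    (E : V ≃ₗ[k] W) : Module.End k V ≃ₐ[k] Module.End k W where
  toFun f := E.toLinearMap ∘ₗ f ∘ₗ E.symm.toLinearMap
  invFun f := E.symm.toLinearMap ∘ₗ f ∘ₗ E.toLinearMap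
  left_inv f := by apply LinearMap.ext; intro v; simp
  right_inv f := by apply LinearMap.ext; intro v; simp
  map_mul' f g := by apply LinearMap.ext; intro v; simp
  map_add' f g := by apply LinearMap.ext; intro v; simp
  commutes' c := by
    apply LinearMap.ext
    intro v
    simp [Module.algebraMap_end_apply]

lemma endCongr_apply {V W : Type*} [AddCommGroup V] [Module k V] [AddCommGroup W] [Module k W]
    (E : V ≃ₗ[k] W) (f : Module.End k V) (w : W) :
    endCongr k E f w = E (f (E.symm w)) := rfl

lemma spec_conj {V W : Type*} [AddCommGroup V] [Module k V] [AddCommGroup W] [Module k W]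
    (E : V ≃ₗ[k] W) (f : Module.End k V) (g : Module.End k W)
    (hfg : ∀ v, E (f v) = g (E v))
    (ρ : Matrix.SpecialLinearGroup (Fin 2) k →* (Module.End k W)ˣ)
    (h : SpecRep k g ρ) :
    ∃ ρ' : Matrix.SpecialLinearGroup (Fin 2) k →* (Module.End k V)ˣ, SpecRep k f ρ' := by
  have hg : g = endCongr k E f := by
    apply LinearMap.ext
    intro w
    rw [endCongr_apply, hfg, E.apply_symm_apply]
  refine ⟨(Units.map (endCongr k E).symm.toRingEquiv.toRingHom.toMonoidHom).comp ρ, ?_⟩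
  intro a gg hgg K hK
  have hgK : g ^ K = 0 := by rw [hg, ← map_pow, hK, map_zero]
  have h1 := h a gg hgg K hgK
  have hval : (((Units.map (endCongr k E).symm.toRingEquiv.toRingHom.toMonoidHom).comp ρ) gg).val
      = (endCongr k E).symm ((ρ gg).val) := rfl
  rw [hval, h1, map_texp, map_smul, hg, (endCongr k E).symm_apply_apply]

variable (k) in
def piEnd {ι : Type*} {V : ι → Type*} [∀ i, AddCommGroup (V i)] [∀ i, Module k (V i)]
    (f : ∀ i, Module.End k (V i)) : Module.End k (∀ i, V i) :=
  LinearMap.pi (fun i => (f i) ∘ₗ LinearMap.proj i)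

section PiEnd

variable {ι : Type*} {V : ι → Type*} [∀ i, AddCommGroup (V i)] [∀ i, Module k (V i)]

lemma piEnd_apply (f : ∀ i, Module.End k (V i)) (v : ∀ i, V i) (i : ι) :
    piEnd k f v i = f i (v i) := rfl

lemma piEnd_mul (f g : ∀ i, Module.End k (V i)) :
    piEnd k f * piEnd k g = piEnd k (fun i => f i * g i) := by
  apply LinearMap.ext; intro v; funext i; rfl

lemma piEnd_one : piEnd k (fun i => (1 : Module.End k (V i))) = 1 := by
  apply LinearMap.ext; intro v; funext i; rfl

lemma piEnd_pow (f : ∀ i, Module.End k (V i)) (m : ℕ) :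
    piEnd k f ^ m = piEnd k (fun i => f i ^ m) := by
  induction m with
  | zero => simpa [pow_zero] using piEnd_one.symm
  | succ m ih => rw [pow_succ, ih, piEnd_mul]; simp only [← pow_succ]

lemma piEnd_smul (f : ∀ i, Module.End k (V i)) (a : k) :
    a • piEnd k f = piEnd k (fun i => a • f i) := by
  apply LinearMap.ext; intro v; funext i; rfl

lemma piEnd_texp (f : ∀ i, Module.End k (V i)) (a : k) (K : ℕ) :
    texp k (a • piEnd k f) K = piEnd k (fun i => texp k (a • f i) K) := by
  apply LinearMap.ext
  intro v
  funext i
  rw [texp, LinearMap.sum_apply, Finset.sum_apply, piEnd_apply, texp, LinearMap.sum_apply]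
  apply Finset.sum_congr rfl
  intro m _
  rw [LinearMap.smul_apply, LinearMap.smul_apply, Pi.smul_apply, piEnd_smul, piEnd_pow,
    piEnd_apply]

lemma spec_pi [Fintype ι] [DecidableEq ι] (f : ∀ i, Module.End k (V i))
    (ρ : ∀ i, Matrix.SpecialLinearGroup (Fin 2) k →* (Module.End k (V i))ˣ)
    (h : ∀ i, SpecRep k (f i) (ρ i)) :
    ∃ ρP : Matrix.SpecialLinearGroup (Fin 2) k →* (Module.End k (∀ i, V i))ˣ,
      SpecRep k (piEnd k f) ρP := by
  refine ⟨MonoidHom.toHomUnits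
    { toFun := fun g => piEnd k (fun i => ((ρ i) g).val),
      map_one' := by
        show piEnd k (fun i => ((ρ i) 1).val) = 1
        rw [show (fun i => ((ρ i) 1).val) = fun i => (1 : Module.End k (V i)) from
          funext fun i => by rw [map_one, Units.val_one], piEnd_one]
      map_mul' := fun g g' => by
        show piEnd k (fun i => ((ρ i) (g * g')).val)
          = piEnd k (fun i => ((ρ i) g).val) * piEnd k (fun i => ((ρ i) g').val)
        rw [show (fun i => ((ρ i) (g * g')).val)
            = fun i => ((ρ i) g).val * ((ρ i) g').val from
          funext fun i => by rw [map_mul, Units.val_mul], ← piEnd_mul] }, ?_⟩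
  intro a g hg K hK
  rw [MonoidHom.coe_toHomUnits]
  show piEnd k (fun i => ((ρ i) g).val) = _
  have h0 : piEnd k (fun i => f i ^ K) = 0 := by rw [← piEnd_pow, hK]
  have hfi : ∀ i, f i ^ K = 0 := by
    intro i
    apply LinearMap.ext
    intro v
    have := congrArg (fun (F : Module.End k (∀ i, V i)) => F (Pi.single i v) i) h0
    simpa [piEnd_apply, Pi.single_eq_same] using this
  rw [show (fun i => ((ρ i) g).val) = fun i => texp k (a • f i) K from
    funext fun i => h i a g hg K (hfi i), ← piEnd_texp]

end PiEnd

lemma exists_rep_of_nilpotent (n : ℕ) (f : Module.End k (Fin n → k)) (hf : IsNilpotent f) :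
    ∃ ρ : Matrix.SpecialLinearGroup (Fin 2) k →* (Module.End k (Fin n → k))ˣ,
      SpecRep k f ρ := by
  classical
  obtain ⟨K0, hK0⟩ := hf
  have hzero : ∀ x : Module.AEval' f, (Polynomial.X ^ K0 : Polynomial k) • x = 0 := by
    intro x
    obtain ⟨m, rfl⟩ := (Module.AEval'.of f).surjective x
    rw [← Module.AEval.of_aeval_smul]
    have : (Polynomial.aeval (R := k) f (Polynomial.X ^ K0)) = 0 := by
      rw [map_pow, Polynomial.aeval_X, hK0]
    rw [this, zero_smul, map_zero]
  have htors : Module.IsTorsion (Polynomial k) (Module.AEval' f) := by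
    intro x
    exact ⟨⟨Polynomial.X ^ K0,
      mem_nonZeroDivisors_of_ne_zero (pow_ne_zero _ Polynomial.X_ne_zero)⟩, hzero x⟩
  obtain ⟨ι, fι, p, hp, e, ⟨E0⟩⟩ := Module.equiv_directSum_of_isTorsion htors
  haveI := fι
  have hdvd : ∀ i, p i ^ e i ∣ Polynomial.X ^ K0 := by
    intro i
    set y : ⨁ i, Polynomial k ⧸ Submodule.span (Polynomial k) {p i ^ e i} :=
      DirectSum.lof (Polynomial k) ι _ i (Submodule.Quotient.mk 1) with hy
    have hann : (Polynomial.X ^ K0 : Polynomial k) • y = 0 := by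
      calc (Polynomial.X ^ K0 : Polynomial k) • y
          = E0 ((Polynomial.X ^ K0 : Polynomial k) • E0.symm y) := by
            rw [map_smul, E0.apply_symm_apply]
        _ = E0 0 := by rw [hzero]
        _ = 0 := map_zero _
    rw [hy, ← map_smul] at hann
    have h3 := congrArg (fun z => z i) hann
    simp only [DirectSum.lof_apply] at h3
    have h4 : (Submodule.Quotient.mk (Polynomial.X ^ K0) :
        Polynomial k ⧸ Submodule.span (Polynomial k) {p i ^ e i}) = 0 := by
      have h5 : (Polynomial.X ^ K0 : Polynomial k) • (Submodule.Quotient.mk 1 :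
          Polynomial k ⧸ Submodule.span (Polynomial k) {p i ^ e i})
          = Submodule.Quotient.mk (Polynomial.X ^ K0) := by
        rw [← Submodule.Quotient.mk_smul, smul_eq_mul, mul_one]
      rw [← h5]
      exact h3
    rw [Submodule.Quotient.mk_eq_zero] at h4
    obtain ⟨c, hc⟩ := Submodule.mem_span_singleton.mp h4
    exact ⟨c, by rw [← hc, smul_eq_mul, mul_comm]⟩
  have hspan : ∀ i, Submodule.span (Polynomial k) {p i ^ e i}
      = Submodule.span (Polynomial k) {(Polynomial.X : Polynomial k) ^ e i} := by
    intro i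
    rcases Nat.eq_zero_or_pos (e i) with h0 | hpos
    · rw [h0, pow_zero, pow_zero]
    · have h1 : p i ∣ Polynomial.X ^ K0 :=
        dvd_trans (dvd_pow_self _ (by omega)) (hdvd i)
      have hprime : Prime (p i) :=
        UniqueFactorizationMonoid.irreducible_iff_prime.mp (hp i)
      have hXdvd : p i ∣ Polynomial.X := hprime.dvd_of_dvd_pow h1
      have hassoc : Associated (p i) (Polynomial.X : Polynomial k) :=
        (hp i).associated_of_dvd Polynomial.irreducible_X hXdvd
      show Ideal.span {p i ^ e i} = Ideal.span {(Polynomial.X : Polynomial k) ^ e i}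
      exact Ideal.span_singleton_eq_span_singleton.mpr (hassoc.pow_pow)
  let E1 : Module.AEval' f ≃ₗ[Polynomial k] ⨁ i, QX k (e i) :=
    E0.trans (DFinsupp.mapRange.linearEquiv (fun i => Submodule.quotEquivOfEq _ _ (hspan i)))
  let E2 : Module.AEval' f ≃ₗ[Polynomial k] ∀ i, QX k (e i) :=
    E1.trans (DirectSum.linearEquivFunOnFintype (Polynomial k) ι (fun i => QX k (e i)))
  let Etot : (Fin n → k) ≃ₗ[k] (∀ i, QX k (e i)) :=
    (Module.AEval'.of f).trans (E2.restrictScalars k)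
  have hint : ∀ v, Etot (f v) = piEnd k (fun i => fQ k (e i)) (Etot v) := by
    intro v
    show (E2.restrictScalars k) (Module.AEval'.of f (f v)) = _
    rw [← Module.AEval'.X_smul_of]
    have h6 : (E2.restrictScalars k) ((Polynomial.X : Polynomial k) • (Module.AEval'.of f v))
        = (Polynomial.X : Polynomial k) • (E2.restrictScalars k) (Module.AEval'.of f v) :=
      E2.map_smul _ _
    rw [h6]
    funext i
    rw [piEnd_apply, fQ_apply]
    rfl
  choose ρs hρs using fun i => exists_block_rep (k := k) (e i)
  obtain ⟨ρP, hρP⟩ := spec_pi (fun i => fQ k (e i)) ρs hρs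
  exact spec_conj Etot f (piEnd k (fun i => fQ k (e i))) hint ρP hρP

end SL2Rep

/-- Any linear action of the additive group `G_a = (k,+)` on `k^n`, given by
`a ↦ exp(aN)` for a nilpotent matrix `N`, extends to a representation of
`SL(2,k)`: there is a homomorphism `ρ : SL(2,k) → GL(n,k)` sending the upper
unitriangular matrix `[[1,a],[0,1]]` to `exp(aN) = ∑_{m<K} (a^m/m!) • N^m`
(a finite sum: the truncated sum is independent of `K` once `N^K = 0`). -/
theorem stmt9 (k : Type*) [Field k] [CharZero k] (n : ℕ) (hn : 1 ≤ n)
    (N : Matrix (Fin n) (Fin n) k) (hN : IsNilpotent N) :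
    ∃ ρ : Matrix.SpecialLinearGroup (Fin 2) k →* GL (Fin n) k,
      ∀ a : k, ∀ g : Matrix.SpecialLinearGroup (Fin 2) k,
        (g : Matrix (Fin 2) (Fin 2) k) = !![1, a; 0, 1] →
          ∀ K : ℕ, N ^ K = 0 →
            ((ρ g : GL (Fin n) k) : Matrix (Fin n) (Fin n) k) =
              ∑ m ∈ Finset.range K, (a ^ m / (Nat.factorial m : k)) • N ^ m := by
  classical
  have hf : IsNilpotent ((LinearMap.toMatrixAlgEquiv' (R := k) (n := Fin n)).symm N) := by
    obtain ⟨K0, hK0⟩ := hN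
    exact ⟨K0, by rw [← map_pow, hK0, map_zero]⟩
  obtain ⟨ρ0, hρ0⟩ := exists_rep_of_nilpotent n _ hf
  refine ⟨(Units.map
    (LinearMap.toMatrixAlgEquiv' (R := k) (n := Fin n)).toRingEquiv.toRingHom.toMonoidHom).comp
      ρ0, ?_⟩
  intro a g hg K hK
  have hfK : ((LinearMap.toMatrixAlgEquiv' (R := k) (n := Fin n)).symm N) ^ K = 0 := by
    rw [← map_pow, hK, map_zero]
  have h1 := hρ0 a g hg K hfK
  show (LinearMap.toMatrixAlgEquiv' (R := k) (n := Fin n)) ((ρ0 g).val) = _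
  rw [h1, map_texp, map_smul, AlgEquiv.apply_symm_apply, texp]
  apply Finset.sum_congr rfl
  intro m _
  rw [smul_pow, smul_smul]
  congr 1
  rw [div_eq_mul_inv, mul_comm]
end
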